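/- arXiv:math/9907127 — 2 statements merged into one kernel-verified Lean document; each statement's English description precedes it below -/
import Mathlib

section
/- (Desnanot–Jacobi / Lewis Carroll identity) For an n×n matrix M with n ≥ 2, det(M)·det(M with first and last rows and first and last columns removed) = det(M with first row and first column removed)·det(M with last row and last column removed) − det(M with first row and last column removed)·det(M with last row and first column removed). -/
open Matrix

private def DJE (n : ℕ) : Fin 2 ⊕ Fin n ≃ Fin (n + 2) where
  toFun x := Sum.elim (![(0 : Fin (n + 2)), Fin.last (n + 1)])
    (fun k => k.succ.castSucc) x
  invFun j := Fin.lastCases (Sum.inl 1)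
    (fun j' => Fin.cases (Sum.inl 0) (fun k => Sum.inr k) j') j
  left_inv := by
    rintro (i | k)
    · fin_cases i
      · show Fin.lastCases (motive := fun _ => Fin 2 ⊕ Fin n) _ _ ((0 : Fin (n+1)).castSucc) = _
        rw [Fin.lastCases_castSucc, Fin.cases_zero]; rfl
      · show Fin.lastCases (motive := fun _ => Fin 2 ⊕ Fin n) _ _ (Fin.last (n+1)) = _
        rw [Fin.lastCases_last]; rfl
    · show Fin.lastCases (motive := fun _ => Fin 2 ⊕ Fin n) _ _ (k.succ.castSucc) = _
      rw [Fin.lastCases_castSucc, Fin.cases_succ]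
  right_inv := by
    intro j
    induction j using Fin.lastCases with
    | last => show Sum.elim _ _ (Fin.lastCases (motive := fun _ => Fin 2 ⊕ Fin n) _ _ (Fin.last (n+1))) = _
              rw [Fin.lastCases_last]; rfl
    | cast j' =>
      show Sum.elim _ _ (Fin.lastCases (motive := fun _ => Fin 2 ⊕ Fin n) _ _ (j'.castSucc)) = _
      rw [Fin.lastCases_castSucc]
      induction j' using Fin.cases with
      | zero => rw [Fin.cases_zero]; rfl
      | succ k => rw [Fin.cases_succ]; rfl

private lemma DJE_inl0 (n : ℕ) : DJE n (Sum.inl 0) = 0 := rfl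
private lemma DJE_inl1 (n : ℕ) : DJE n (Sum.inl 1) = Fin.last (n+1) := rfl
private lemma DJE_inr (n : ℕ) (k : Fin n) : DJE n (Sum.inr k) = k.succ.castSucc := rfl

/-- The multiplied-by-`det M` version of Desnanot–Jacobi, valid over any commutative ring. -/
private lemma dj_mul {R : Type*} [CommRing R] (n : ℕ)
    (M : Matrix (Fin (n + 2)) (Fin (n + 2)) R) :
    M.det * (M.det *
        (M.submatrix (fun i : Fin n => i.succ.castSucc)
          (fun j : Fin n => j.succ.castSucc)).det) =
      M.det * ((M.submatrix Fin.succ Fin.succ).det * (M.submatrix Fin.castSucc Fin.castSucc).det -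
        (M.submatrix Fin.succ Fin.castSucc).det * (M.submatrix Fin.castSucc Fin.succ).det) := by
  set l : Fin (n + 2) := Fin.last (n + 1) with hldef
  have hl0 : l ≠ 0 := by simp [hldef, Fin.ext_iff]
  have hm0 : ∀ k : Fin n, k.succ.castSucc ≠ 0 := by
    intro k; simp [Fin.ext_iff]
  have hml : ∀ k : Fin n, k.succ.castSucc ≠ l := by
    intro k; simp [hldef, Fin.ext_iff]; omega
  have hm0' : ∀ k : Fin n, k.castSucc.succ ≠ 0 := hm0
  have hml' : ∀ k : Fin n, k.castSucc.succ ≠ l := hml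
  set B : Matrix (Fin (n + 2)) (Fin (n + 2)) R := Matrix.of fun j k =>
    if k = 0 then M.adjugate j 0 else if k = l then M.adjugate j l
      else if j = k then 1 else 0 with hB
  set D : Matrix (Fin (n + 2)) (Fin (n + 2)) R := Matrix.of fun i k =>
    if k = 0 then M.det * (if i = 0 then 1 else 0)
      else if k = l then M.det * (if i = l then 1 else 0) else M i k with hD
  have key : ∀ i c, (∑ j, M i j * M.adjugate j c) = M.det * (if i = c then 1 else 0) := by
    intro i c
    have h := congrFun (congrFun (mul_adjugate M) i) c
    rw [mul_apply] at h
    simpa [one_apply] using h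
  have hMB : M * B = D := by
    ext i k
    rw [mul_apply]
    by_cases h0 : k = 0
    · subst h0
      simp only [hB, hD, of_apply, if_pos rfl]
      exact key i 0
    · by_cases hl : k = l
      · simp only [hB, hD, of_apply, if_neg h0, if_pos hl, hl]
        exact key i l
      · simp only [hB, hD, of_apply, if_neg h0, if_neg hl, mul_ite, mul_one, mul_zero]
        simp
  -- determinant of D
  have hDsub : D.submatrix (DJE n) (DJE n) =
      fromBlocks (M.det • (1 : Matrix (Fin 2) (Fin 2) R))
        (Matrix.of fun i j => D (DJE n (Sum.inl i)) (DJE n (Sum.inr j))) 0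
        (M.submatrix (fun i : Fin n => i.succ.castSucc) (fun j : Fin n => j.succ.castSucc)) := by
    ext x y
    rcases x with i | i <;> rcases y with j | j
    · fin_cases i <;> fin_cases j <;>
        simp [hD, DJE_inl0, DJE_inl1, fromBlocks, one_apply, hl0, hl0.symm, ← hldef]
    · rfl
    · fin_cases j <;>
        simp [hD, DJE_inl0, DJE_inl1, DJE_inr, fromBlocks, hm0, hml, hl0, hm0', hml', ← hldef]
    · simp [hD, DJE_inr, fromBlocks, hm0, hml, hm0', hml']
  have hdetD : D.det = M.det * M.det *
      (M.submatrix (fun i : Fin n => i.succ.castSucc) (fun j : Fin n => j.succ.castSucc)).det := by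
    rw [← det_submatrix_equiv_self (DJE n) D, hDsub, det_fromBlocks_zero₂₁, det_smul, det_one,
      mul_one]
    norm_num [pow_two]
  -- determinant of B
  have hBsub : B.submatrix (DJE n) (DJE n) =
      fromBlocks (!![M.adjugate 0 0, M.adjugate 0 l; M.adjugate l 0, M.adjugate l l]) 0
        (Matrix.of fun i j => B (DJE n (Sum.inr i)) (DJE n (Sum.inl j))) (1 : Matrix (Fin n) (Fin n) R) := by
    ext x y
    rcases x with i | i <;> rcases y with j | j
    · fin_cases i <;> fin_cases j <;>
        simp [hB, DJE_inl0, DJE_inl1, fromBlocks, hl0, hl0.symm, ← hldef]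
    · fin_cases i <;>
        simp [hB, DJE_inl0, DJE_inl1, DJE_inr, fromBlocks, hm0, hml, hl0,
          (hm0 _).symm, (hml _).symm, hm0', hml', (hm0' _).symm, (hml' _).symm, ← hldef]
    · rfl
    · simp only [submatrix_apply, DJE_inr, fromBlocks_apply₂₂, hB, of_apply,
        if_neg (hm0 _), if_neg (hml _), one_apply]
      congr 1
      simp [Fin.ext_iff]
  have hdetB : B.det =
      (M.submatrix Fin.succ Fin.succ).det * (M.submatrix Fin.castSucc Fin.castSucc).det -
        (M.submatrix Fin.succ Fin.castSucc).det * (M.submatrix Fin.castSucc Fin.succ).det := by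
    rw [← det_submatrix_equiv_self (DJE n) B, hBsub, det_fromBlocks_zero₁₂, det_one, mul_one,
      det_fin_two_of]
    have a00 : M.adjugate 0 0 = (M.submatrix Fin.succ Fin.succ).det := by
      rw [adjugate_fin_succ_eq_det_submatrix]
      simp
    have all : M.adjugate l l = (M.submatrix Fin.castSucc Fin.castSucc).det := by
      rw [adjugate_fin_succ_eq_det_submatrix, hldef]
      simp only [Fin.val_last, Fin.succAbove_last]
      rw [Even.neg_one_pow ⟨n + 1, rfl⟩, one_mul]
    have a0l : M.adjugate 0 l = (-1 : R) ^ (n + 1) * (M.submatrix Fin.castSucc Fin.succ).det := by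
      rw [adjugate_fin_succ_eq_det_submatrix]
      simp [hldef]
    have al0 : M.adjugate l 0 = (-1 : R) ^ (n + 1) * (M.submatrix Fin.succ Fin.castSucc).det := by
      rw [adjugate_fin_succ_eq_det_submatrix]
      simp [hldef]
    rw [a00, all, a0l, al0]
    have sq : ((-1 : R) ^ (n + 1)) * ((-1 : R) ^ (n + 1)) = 1 := by
      rw [← pow_add]; exact Even.neg_one_pow ⟨n + 1, by ring⟩
    calc (M.submatrix Fin.succ Fin.succ).det * (M.submatrix Fin.castSucc Fin.castSucc).det -
          ((-1 : R) ^ (n + 1) * (M.submatrix Fin.castSucc Fin.succ).det) *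
            ((-1 : R) ^ (n + 1) * (M.submatrix Fin.succ Fin.castSucc).det)
        = (M.submatrix Fin.succ Fin.succ).det * (M.submatrix Fin.castSucc Fin.castSucc).det -
            (((-1 : R) ^ (n + 1)) * ((-1 : R) ^ (n + 1))) *
              ((M.submatrix Fin.succ Fin.castSucc).det *
                (M.submatrix Fin.castSucc Fin.succ).det) := by ring
      _ = _ := by rw [sq, one_mul]
  have := congrArg Matrix.det hMB
  rw [det_mul, hdetD, hdetB] at this
  linear_combination -this




/-- Desnanot–Jacobi (Lewis Carroll) identity: for an `n×n` matrix `M`, `n ≥ 2`,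
`det M · det M^{1,n}_{1,n} = det M^1_1 · det M^n_n − det M^1_n · det M^n_1`,
where a superscript (resp. subscript) indicates a deleted row (resp. column). -/
theorem desnanot_jacobi {R : Type*} [CommRing R] (n : ℕ)
    (M : Matrix (Fin (n + 2)) (Fin (n + 2)) R) :
    M.det *
        (M.submatrix (fun i : Fin n => i.succ.castSucc)
          (fun j : Fin n => j.succ.castSucc)).det =
      (M.submatrix Fin.succ Fin.succ).det * (M.submatrix Fin.castSucc Fin.castSucc).det -
        (M.submatrix Fin.succ Fin.castSucc).det * (M.submatrix Fin.castSucc Fin.succ).det := by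
  set G : Matrix (Fin (n + 2)) (Fin (n + 2)) (MvPolynomial (Fin (n + 2) × Fin (n + 2)) ℤ) :=
    Matrix.of fun i j => MvPolynomial.X (i, j) with hG
  have hGdet : G.det ≠ 0 := by
    intro h
    set ψ : MvPolynomial (Fin (n + 2) × Fin (n + 2)) ℤ →+* ℤ :=
      MvPolynomial.eval₂Hom (RingHom.id ℤ)
        (fun p : Fin (n + 2) × Fin (n + 2) => if p.1 = p.2 then 1 else 0) with hψ
    have h1 : ψ.mapMatrix G = (1 : Matrix (Fin (n + 2)) (Fin (n + 2)) ℤ) := by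
      ext i j
      simp [hG, hψ, one_apply]
    have h2 := congrArg ψ h
    rw [RingHom.map_det, h1, det_one, map_zero] at h2
    exact one_ne_zero h2
  have hid := mul_left_cancel₀ hGdet (dj_mul n G)
  set φ : MvPolynomial (Fin (n + 2) × Fin (n + 2)) ℤ →+* R :=
    MvPolynomial.eval₂Hom (Int.castRingHom R) (fun p => M p.1 p.2) with hφ
  have hmap : φ.mapMatrix G = M := by
    ext i j
    simp [hG, hφ]
  have h3 := congrArg φ hid
  simp only [_root_.map_mul, _root_.map_sub, RingHom.map_det] at h3
  simp only [RingHom.mapMatrix_apply] at h3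
  simp only [← Matrix.submatrix_map] at h3
  rw [show G.map ⇑φ = φ.mapMatrix G from rfl, hmap] at h3
  exact h3
end

section
/- (Jacobi–Trudi matrix-element identity) For partitions μ ⊆ λ with at most n parts, det(h_{λ_i − μ_j + j − i}(x))_{1≤i,j≤n} = s_{λ/μ}(x), the skew Schur function; in particular for μ = ∅, det(h_{λ_i + j − i})_{1≤i,j≤n} = s_λ(x). -/
open MvPolynomial Finset
open scoped Classical

/-- `h_k` with integer index, `h_k = 0` for `k < 0`, `h_0 = 1`. -/
noncomputable def hInt (N : ℕ) (k : ℤ) : MvPolynomial (Fin N) ℚ :=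
  if 0 ≤ k then hsymm (Fin N) ℚ k.toNat else 0

/-- The boxes of the skew shape `λ/μ`, for partitions with part functions `f` (for `λ`)
and `g` (for `μ`), with at most `n` parts: the cells `(i,j)` with `g i ≤ j < f i`. -/
def skewBoxes (n : ℕ) (f g : ℕ → ℕ) : Finset (ℕ × ℕ) :=
  (Finset.range n ×ˢ Finset.range (f 0)).filter fun p => g p.1 ≤ p.2 ∧ p.2 < f p.1

/-- A filling of the skew shape is semistandard: rows weakly increase, columns strictly
increase. -/
def IsSsyt (n : ℕ) (f g : ℕ → ℕ) {N : ℕ} (T : skewBoxes n f g → Fin N) : Prop :=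
  ∀ p q : skewBoxes n f g,
    ((p : ℕ × ℕ).1 = (q : ℕ × ℕ).1 ∧ (q : ℕ × ℕ).2 = (p : ℕ × ℕ).2 + 1 → T p ≤ T q) ∧
    ((q : ℕ × ℕ).1 = (p : ℕ × ℕ).1 + 1 ∧ (q : ℕ × ℕ).2 = (p : ℕ × ℕ).2 → T p < T q)

/-- The skew Schur polynomial `s_{λ/μ}` in `N` variables: the generating polynomial of
semistandard Young tableaux of shape `λ/μ` with entries in `{1,…,N}`. -/
noncomputable def skewSchur (n N : ℕ) (f g : ℕ → ℕ) : MvPolynomial (Fin N) ℚ :=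
  ∑ T ∈ (Finset.univ : Finset (skewBoxes n f g → Fin N)).filter (IsSsyt n f g),
    ∏ p, X (T p)

namespace JTaux

variable {N : ℕ}

noncomputable def wt (q : Fin (N+1) → ℤ) : MvPolynomial (Fin N) ℚ :=
  ∏ v : Fin N, (X v : MvPolynomial (Fin N) ℚ) ^ (q v.succ - q v.castSucc).toNat

noncomputable def PathSet (N : ℕ) (a b : ℤ) : Finset (Fin (N+1) → ℤ) :=
  (Fintype.piFinset fun _ => Finset.Icc a b).filter
    fun q => Monotone q ∧ q 0 = a ∧ q (Fin.last N) = b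

lemma partial_tele (q : Fin (N+1) → ℤ) (hq : Monotone q) (v : Fin (N+1)) :
    ∑ u ∈ Finset.univ.filter (fun u : Fin N => (u : ℕ) < (v : ℕ)),
      ((q u.succ - q u.castSucc).toNat : ℤ) = q v - q 0 := by
  have key : ∀ u : Fin N, ((q u.succ - q u.castSucc).toNat : ℤ) = q u.succ - q u.castSucc := by
    intro u
    exact Int.toNat_of_nonneg (by have := hq (Fin.castSucc_le_succ u); omega)
  rw [Finset.sum_congr rfl (fun u _ => key u)]
  have hv : (⟨(v : ℕ) ⊓ N, by omega⟩ : Fin (N+1)) = v := by ext; simp; omega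
  have h0 : (⟨0 ⊓ N, by omega⟩ : Fin (N+1)) = 0 := by ext; simp
  have tele := Finset.sum_range_sub (fun m => q ⟨m ⊓ N, by omega⟩) (v : ℕ)
  simp only [hv, h0] at tele
  rw [← tele]
  refine Finset.sum_bij' (fun (u : Fin N) (_ : u ∈ Finset.univ.filter (fun u : Fin N => (u : ℕ) < (v : ℕ))) => (u : ℕ))
    (fun m hm => (⟨m, by simp only [Finset.mem_range] at hm; omega⟩ : Fin N)) ?_ ?_ ?_ ?_ ?_
  · intro u hu; simp only [Finset.mem_filter] at hu; simp [hu.2]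
  · intro m hm; simp only [Finset.mem_range] at hm
    simp only [Finset.mem_filter, Finset.mem_univ, true_and]; exact hm
  · intro u hu; ext; simp
  · intro m hm; simp
  · intro u hu
    simp only [Finset.mem_filter, Finset.mem_univ, true_and] at hu
    have hu' : (u : ℕ) < N := u.isLt
    congr 1
    · congr 1; ext; simp [Fin.val_succ]
    · congr 1; ext; simp [Fin.coe_castSucc]

lemma full_tele (q : Fin (N+1) → ℤ) (hq : Monotone q) :
    ∑ u : Fin N, ((q u.succ - q u.castSucc).toNat : ℤ) = q (Fin.last N) - q 0 := by
  have := partial_tele q hq (Fin.last N)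
  rw [← this]
  apply Finset.sum_congr _ (fun _ _ => rfl)
  symm
  apply Finset.filter_true_of_mem
  intro u _; simpa [Fin.last] using u.isLt

lemma card_filter_eq_sum_count (m : Multiset (Fin N)) (p : Fin N → Prop) [DecidablePred p] :
    (m.filter p).card = ∑ u ∈ Finset.univ.filter p, m.count u := by
  induction m using Multiset.induction with
  | empty => simp
  | cons a s ih =>
      simp only [Multiset.filter_cons, Multiset.count_cons, Finset.sum_add_distrib, ← ih]
      rw [Finset.sum_ite_eq' (Finset.univ.filter p) a (fun _ => 1)]
      by_cases hpa : p a <;> simp [hpa, Multiset.filter_cons]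

lemma filter_window (v : Fin N) (p := fun u : Fin N => (u : ℕ) < (v : ℕ)) :
    Finset.univ.filter (fun u : Fin N => (u : ℕ) < (v : ℕ) + 1)
      = insert v (Finset.univ.filter fun u : Fin N => (u : ℕ) < (v : ℕ)) := by
  ext u
  simp only [Finset.mem_filter, Finset.mem_univ, true_and, Finset.mem_insert]
  constructor
  · intro h
    rcases Nat.lt_succ_iff_lt_or_eq.mp h with h | h
    · exact Or.inr h
    · exact Or.inl (Fin.ext h)
  · rintro (rfl | h) <;> omega

lemma count_jq (c : Fin N → ℕ) (u : Fin N) :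
    Multiset.count u (∑ v : Fin N, Multiset.replicate (c v) v) = c u := by
  rw [Multiset.count_sum']
  simp only [Multiset.count_replicate]
  rw [Finset.sum_ite_eq' Finset.univ u c]
  simp

lemma sum_count_univ (m : Multiset (Fin N)) : ∑ u : Fin N, m.count u = Multiset.card m := by
  rw [← Multiset.toFinset_sum_count_eq]
  symm
  apply Finset.sum_subset (Finset.subset_univ _)
  intro u _ hu
  exact Multiset.count_eq_zero_of_notMem (fun h => hu (Multiset.mem_toFinset.mpr h))

lemma card_filter_lt (m : Multiset (Fin N)) (v : ℕ) :
    (m.filter fun w : Fin N => (w : ℕ) < v).card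
      = ∑ u ∈ Finset.univ.filter (fun u : Fin N => (u : ℕ) < v), m.count u :=
  card_filter_eq_sum_count m _

lemma window_card (m : Multiset (Fin N)) (u : Fin N) :
    (m.filter fun w : Fin N => (w : ℕ) < (u : ℕ) + 1).card
      = (m.filter fun w : Fin N => (w : ℕ) < (u : ℕ)).card + m.count u := by
  rw [card_filter_lt, card_filter_lt, filter_window u]
  rw [Finset.sum_insert (by simp)]
  ring

lemma left_inv_aux (a : ℤ) (m : Multiset (Fin N)) (u : Fin N) :
    Multiset.count u (∑ v : Fin N, Multiset.replicate
      (((a + ((m.filter (fun w : Fin N => (w : ℕ) < ((v.succ : Fin (N+1)) : ℕ))).card : ℤ))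
        - (a + ((m.filter (fun w : Fin N => (w : ℕ) < ((v.castSucc : Fin (N+1)) : ℕ))).card : ℤ))).toNat) v)
      = m.count u := by
  rw [count_jq]
  have hw := window_card m u
  simp only [Fin.val_succ, Fin.coe_castSucc]
  omega

lemma right_inv_aux (a : ℤ) (q : Fin (N+1) → ℤ) (hmono : Monotone q) (h0 : q 0 = a)
    (v : Fin (N+1)) :
    a + (((∑ w : Fin N, Multiset.replicate ((q w.succ - q w.castSucc).toNat) w).filter
      (fun u : Fin N => (u : ℕ) < (v : ℕ))).card : ℤ) = q v := by
  have hc : ((∑ w : Fin N, Multiset.replicate ((q w.succ - q w.castSucc).toNat) w).filter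
      (fun u : Fin N => (u : ℕ) < (v : ℕ))).card
      = ∑ u ∈ Finset.univ.filter (fun u : Fin N => (u : ℕ) < (v : ℕ)),
          (q u.succ - q u.castSucc).toNat := by
    rw [card_filter_lt]
    exact Finset.sum_congr rfl (fun u _ => count_jq _ u)
  have hpt := partial_tele q hmono v
  have h3 : ((∑ u ∈ Finset.univ.filter (fun u : Fin N => (u : ℕ) < (v : ℕ)),
      (q u.succ - q u.castSucc).toNat : ℕ) : ℤ)
      = ∑ u ∈ Finset.univ.filter (fun u : Fin N => (u : ℕ) < (v : ℕ)),
          ((q u.succ - q u.castSucc).toNat : ℤ) := by push_cast; rfl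
  rw [hc]
  omega

lemma wt_aux (a : ℤ) (m : Multiset (Fin N)) :
    wt (fun v : Fin (N+1) => a + ((m.filter (fun u : Fin N => (u : ℕ) < (v : ℕ))).card : ℤ))
      = (m.map X).prod := by
  rw [wt]
  have hexp : ∀ u : Fin N,
      ((a + ((m.filter (fun w : Fin N => (w : ℕ) < ((u.succ : Fin (N+1)) : ℕ))).card : ℤ))
       - (a + ((m.filter (fun w : Fin N => (w : ℕ) < ((u.castSucc : Fin (N+1)) : ℕ))).card : ℤ))).toNat
      = m.count u := by
    intro u
    have hw := window_card m u
    simp only [Fin.val_succ, Fin.coe_castSucc]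
    omega
  calc ∏ u : Fin N, (X u : MvPolynomial (Fin N) ℚ) ^ (((fun v : Fin (N+1) => a
          + ((m.filter (fun w : Fin N => (w : ℕ) < (v : ℕ))).card : ℤ)) u.succ
        - (fun v : Fin (N+1) => a
          + ((m.filter (fun w : Fin N => (w : ℕ) < (v : ℕ))).card : ℤ)) u.castSucc)).toNat
      = ∏ u : Fin N, (X u : MvPolynomial (Fin N) ℚ) ^ m.count u :=
        Finset.prod_congr rfl (fun u _ => by rw [hexp u])
    _ = ∏ u ∈ m.toFinset, (X u : MvPolynomial (Fin N) ℚ) ^ m.count u := by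
        symm
        apply Finset.prod_subset (Finset.subset_univ _)
        intro u _ hu
        rw [Multiset.count_eq_zero_of_notMem (fun h => hu (Multiset.mem_toFinset.mpr h))]
        rfl
    _ = (m.map X).prod := (Finset.prod_multiset_map_count _ _).symm

lemma hPaths (a b : ℤ) : hInt N (b - a) = ∑ q ∈ PathSet N a b, wt q := by
  by_cases hab : 0 ≤ b - a
  · unfold hInt
    rw [if_pos hab, hsymm]
    set k := (b - a).toNat with hk
    have hbk : b = a + (k : ℤ) := by omega
    -- the path associated to a multiset
    have pmem : ∀ μ : Sym (Fin N) k,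
        (fun v : Fin (N+1) => a + (((μ : Multiset (Fin N)).filter
            (fun u : Fin N => (u : ℕ) < (v : ℕ))).card : ℤ)) ∈ PathSet N a b := by
      intro μ
      have hcard : Multiset.card (μ : Multiset (Fin N)) = k := μ.2
      rw [PathSet, Finset.mem_filter]
      refine ⟨?_, ?_, ?_, ?_⟩
      · rw [Fintype.mem_piFinset]
        intro v
        rw [Finset.mem_Icc]
        constructor
        · omega
        · have : Multiset.card ((μ : Multiset (Fin N)).filter
              (fun u : Fin N => (u : ℕ) < (v : ℕ))) ≤ k :=
            le_trans (Multiset.card_le_card (Multiset.filter_le _ _)) (le_of_eq hcard)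
          omega
      · intro v w hvw
        have : ((μ : Multiset (Fin N)).filter (fun u : Fin N => (u : ℕ) < (v : ℕ)))
            ≤ ((μ : Multiset (Fin N)).filter (fun u : Fin N => (u : ℕ) < (w : ℕ))) :=
          Multiset.monotone_filter_right _ (fun b hb => lt_of_lt_of_le hb hvw)
        have := Multiset.card_le_card this
        simp only []
        omega
      · show a + _ = a
        have : ((μ : Multiset (Fin N)).filter
            (fun u : Fin N => (u : ℕ) < ((0 : Fin (N+1)) : ℕ))) = 0 :=
          Multiset.filter_eq_nil.mpr (by simp)
        rw [this]
        simp
      · show a + ((((μ : Multiset (Fin N)).filter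
            (fun u : Fin N => (u : ℕ) < ((Fin.last N : Fin (N+1)) : ℕ))).card : ℕ) : ℤ) = b
        have : ((μ : Multiset (Fin N)).filter
            (fun u : Fin N => (u : ℕ) < ((Fin.last N : Fin (N+1)) : ℕ)))
            = (μ : Multiset (Fin N)) := by
          rw [Multiset.filter_eq_self]
          intro u _
          simpa [Fin.last] using u.isLt
        rw [this, hcard]
        omega
    have qmono : ∀ q ∈ PathSet N a b, Monotone q ∧ q 0 = a ∧ q (Fin.last N) = b := by
      intro q hq
      rw [PathSet, Finset.mem_filter] at hq
      exact hq.2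
    have invmem : ∀ q ∈ PathSet N a b,
        Multiset.card (∑ v : Fin N,
          Multiset.replicate ((q v.succ - q v.castSucc).toNat) v) = k := by
      intro q hq
      obtain ⟨hmono, h0, hl⟩ := qmono q hq
      have h1 : ∑ u : Fin N, Multiset.count u (∑ v : Fin N,
          Multiset.replicate ((q v.succ - q v.castSucc).toNat) v)
          = ∑ u : Fin N, (q u.succ - q u.castSucc).toNat := by
        apply Finset.sum_congr rfl
        intro u _
        exact count_jq _ u
      have h2 := full_tele q hmono
      have h3 : ((∑ u : Fin N, (q u.succ - q u.castSucc).toNat : ℕ) : ℤ)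
          = ∑ u : Fin N, ((q u.succ - q u.castSucc).toNat : ℤ) := by push_cast; rfl
      rw [← sum_count_univ, h1]
      omega
    refine Finset.sum_bij' (fun μ _ => (fun v : Fin (N+1) => a + (((μ : Multiset (Fin N)).filter
            (fun u : Fin N => (u : ℕ) < (v : ℕ))).card : ℤ)))
      (fun q hq => (⟨∑ v : Fin N, Multiset.replicate ((q v.succ - q v.castSucc).toNat) v,
        invmem q hq⟩ : Sym (Fin N) k)) (fun μ _ => pmem μ) (fun q hq => Finset.mem_univ _)
      ?_ ?_ ?_
    · -- j (i μ) = μ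
      intro μ _
      exact Sym.ext (Multiset.ext.mpr fun u => left_inv_aux a (μ : Multiset (Fin N)) u)
    · -- i (j q) = q
      intro q hq
      obtain ⟨hmono, h0, hl⟩ := qmono q hq
      funext v
      exact right_inv_aux a q hmono h0 v
    · -- weights
      intro μ _
      exact (wt_aux a (μ : Multiset (Fin N))).symm
  · unfold hInt
    rw [if_neg hab]
    have : PathSet N a b = ∅ := by
      rw [Finset.eq_empty_iff_forall_notMem]
      intro q hq
      rw [PathSet, Finset.mem_filter] at hq
      obtain ⟨-, hmono, h0, hl⟩ := hq
      have := hmono (Fin.zero_le (Fin.last N))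
      omega
    simp [this]

section Fam

variable {n : ℕ} (f g : ℕ → ℕ)

def aF (i : Fin n) : ℤ := (g i : ℤ) - (i : ℤ)
def bF (i : Fin n) : ℤ := (f i : ℤ) - (i : ℤ)

def valid (x : Equiv.Perm (Fin n) × (Fin n → Fin (N+1) → ℤ)) : Prop :=
  ∀ i, Monotone (x.2 i) ∧ x.2 i 0 = aF g i ∧ x.2 i (Fin.last N) = bF f (x.1 i)

noncomputable def famS (n N : ℕ) (f g : ℕ → ℕ) :
    Finset (Equiv.Perm (Fin n) × (Fin n → Fin (N+1) → ℤ)) :=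
  ((Finset.univ : Finset (Equiv.Perm (Fin n))) ×ˢ
    Fintype.piFinset fun _ : Fin n => Fintype.piFinset fun _ : Fin (N+1) =>
      Finset.Icc (-(n:ℤ)) ((f 0 : ℤ))).filter (valid f g)

lemma box_filter_eq (hf : Antitone f) (hgf : ∀ i, g i ≤ f i) (σ : Equiv.Perm (Fin n)) :
    ((Fintype.piFinset fun _ : Fin n => Fintype.piFinset fun _ : Fin (N+1) =>
        Finset.Icc (-(n:ℤ)) ((f 0 : ℤ))).filter fun q => valid f g (σ, q))
      = Fintype.piFinset (fun i => PathSet N (aF g i) (bF f (σ i))) := by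
  ext q
  rw [Finset.mem_filter]
  simp only [Finset.mem_filter, Fintype.mem_piFinset, PathSet, Finset.mem_Icc, valid]
  constructor
  · rintro ⟨hbox, hval⟩ i
    obtain ⟨hmono, h0, hl⟩ := hval i
    refine ⟨?_, hmono, h0, hl⟩
    intro v
    have h1 : q i 0 ≤ q i v := hmono (Fin.zero_le v)
    have h2 : q i v ≤ q i (Fin.last N) := hmono (Fin.le_last v)
    rw [aF, bF] at *
    constructor <;> omega
  · intro h
    refine ⟨?_, fun i => (h i).2⟩
    intro i v
    obtain ⟨hlo, hhi⟩ := (h i).1 v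
    have hin : (i : ℕ) < n := i.isLt
    have hfi : f (σ i) ≤ f 0 := hf (Nat.zero_le _)
    have hσ : ((σ i : Fin n) : ℕ) < n := (σ i).isLt
    have h0 : (0:ℤ) ≤ (g i : ℤ) := by positivity
    rw [aF, bF] at *
    constructor <;> omega

theorem det_eq_sum_fam (hf : Antitone f) (hgf : ∀ i, g i ≤ f i) :
    Matrix.det (Matrix.of fun i j : Fin n =>
        hInt N ((f i : ℤ) - (g j : ℤ) + (j : ℤ) - (i : ℤ)))
      = ∑ x ∈ famS n N f g,
          ((Equiv.Perm.sign x.1 : ℤ) • (∏ i, wt (x.2 i)) : MvPolynomial (Fin N) ℚ) := by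
  rw [Matrix.det_apply]
  rw [famS, Finset.sum_filter, Finset.sum_product]
  apply Finset.sum_congr rfl
  intro σ _
  have hrow : ∏ i, (Matrix.of fun i j : Fin n =>
      hInt N ((f i : ℤ) - (g j : ℤ) + (j : ℤ) - (i : ℤ))) (σ i) i
      = ∑ Q ∈ Fintype.piFinset (fun i => PathSet N (aF g i) (bF f (σ i))),
          ∏ i, wt (Q i) := by
    rw [← Finset.prod_univ_sum]
    apply Finset.prod_congr rfl
    intro i _
    have : (f (σ i) : ℤ) - (g i : ℤ) + (i : ℤ) - ((σ i : Fin n) : ℤ)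
        = bF f (σ i) - aF g i := by
      rw [bF, aF]; ring
    rw [Matrix.of_apply, this, hPaths]
  rw [hrow, ← box_filter_eq f g hf hgf σ, Finset.sum_filter, Finset.smul_sum]
  apply Finset.sum_congr rfl
  intro q _
  by_cases hv : valid f g (σ, q) <;> simp [hv, Units.smul_def, zsmul_eq_mul]

def onP (q : Fin (N+1) → ℤ) (p : Fin N × ℤ) : Prop :=
  q p.1.castSucc ≤ p.2 ∧ p.2 ≤ q p.1.succ

def meet (q r : Fin (N+1) → ℤ) (v : Fin N) : Prop :=
  q v.castSucc ≤ r v.succ ∧ r v.castSucc ≤ q v.succ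

def Crossing (x : Equiv.Perm (Fin n) × (Fin n → Fin (N+1) → ℤ)) : Prop :=
  ∃ i j v, i ≠ j ∧ meet (x.2 i) (x.2 j) v

def Bvals (q : Fin n → Fin (N+1) → ℤ) : Finset ℤ :=
  Finset.image (fun iv : Fin n × Fin (N+1) => q iv.1 iv.2) Finset.univ

noncomputable def crowd (q : Fin n → Fin (N+1) → ℤ) (p : Fin N × ℤ) : Finset (Fin n) :=
  Finset.univ.filter fun i => onP (q i) p

noncomputable def DP (q : Fin n → Fin (N+1) → ℤ) : Finset (Fin N × ℤ) :=
  ((Finset.univ : Finset (Fin N)) ×ˢ Bvals q).filter fun p => 2 ≤ (crowd q p).card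

def splice (v : Fin N) (q r : Fin (N+1) → ℤ) : Fin (N+1) → ℤ :=
  fun u => if (u : ℕ) ≤ (v : ℕ) then q u else r u

section Flip

variable {n : ℕ}

noncomputable def pOf (x : Equiv.Perm (Fin n) × (Fin n → Fin (N+1) → ℤ))
    (h : (DP x.2).Nonempty) : Fin N × ℤ := h.choose

lemma DP_spec (x : Equiv.Perm (Fin n) × (Fin n → Fin (N+1) → ℤ))
    (h : (DP x.2).Nonempty) : pOf x h ∈ DP x.2 := h.choose_spec

lemma two_le_card_crowd (x : Equiv.Perm (Fin n) × (Fin n → Fin (N+1) → ℤ))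
    (h : (DP x.2).Nonempty) : 2 ≤ (crowd x.2 (pOf x h)).card := by
  have := DP_spec x h
  rw [DP, Finset.mem_filter] at this
  exact this.2

noncomputable def iOf (x : Equiv.Perm (Fin n) × (Fin n → Fin (N+1) → ℤ))
    (h : (DP x.2).Nonempty) : Fin n :=
  (crowd x.2 (pOf x h)).min' (Finset.card_pos.mp (by have := two_le_card_crowd x h; omega))

noncomputable def jOf (x : Equiv.Perm (Fin n) × (Fin n → Fin (N+1) → ℤ))
    (h : (DP x.2).Nonempty) : Fin n :=
  ((crowd x.2 (pOf x h)).erase (iOf x h)).min' (Finset.card_pos.mp (by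
    rw [Finset.card_erase_of_mem
      (show iOf x h ∈ crowd x.2 (pOf x h) from Finset.min'_mem _ _)]
    have := two_le_card_crowd x h; omega))

noncomputable def flipAux (x : Equiv.Perm (Fin n) × (Fin n → Fin (N+1) → ℤ))
    (h : (DP x.2).Nonempty) : Equiv.Perm (Fin n) × (Fin n → Fin (N+1) → ℤ) :=
  (x.1 * Equiv.swap (iOf x h) (jOf x h),
   fun k => if k = iOf x h then splice (pOf x h).1 (x.2 (iOf x h)) (x.2 (jOf x h))
     else if k = jOf x h then splice (pOf x h).1 (x.2 (jOf x h)) (x.2 (iOf x h))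
     else x.2 k)

lemma iOf_mem (x : Equiv.Perm (Fin n) × (Fin n → Fin (N+1) → ℤ)) (h : (DP x.2).Nonempty) :
    iOf x h ∈ crowd x.2 (pOf x h) := Finset.min'_mem _ _

lemma jOf_mem' (x : Equiv.Perm (Fin n) × (Fin n → Fin (N+1) → ℤ)) (h : (DP x.2).Nonempty) :
    jOf x h ∈ (crowd x.2 (pOf x h)).erase (iOf x h) := Finset.min'_mem _ _

lemma jOf_mem (x : Equiv.Perm (Fin n) × (Fin n → Fin (N+1) → ℤ)) (h : (DP x.2).Nonempty) :
    jOf x h ∈ crowd x.2 (pOf x h) := Finset.mem_of_mem_erase (jOf_mem' x h)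

lemma iOf_ne_jOf (x : Equiv.Perm (Fin n) × (Fin n → Fin (N+1) → ℤ)) (h : (DP x.2).Nonempty) :
    iOf x h ≠ jOf x h := Ne.symm (Finset.ne_of_mem_erase (jOf_mem' x h))

lemma onP_iOf (x : Equiv.Perm (Fin n) × (Fin n → Fin (N+1) → ℤ)) (h : (DP x.2).Nonempty) :
    onP (x.2 (iOf x h)) (pOf x h) := by
  have := iOf_mem x h
  rw [crowd, Finset.mem_filter] at this
  exact this.2

lemma onP_jOf (x : Equiv.Perm (Fin n) × (Fin n → Fin (N+1) → ℤ)) (h : (DP x.2).Nonempty) :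
    onP (x.2 (jOf x h)) (pOf x h) := by
  have := jOf_mem x h
  rw [crowd, Finset.mem_filter] at this
  exact this.2

lemma splice_zero (v : Fin N) (q r : Fin (N+1) → ℤ) : splice v q r 0 = q 0 :=
  if_pos (by simp)

lemma splice_last (v : Fin N) (q r : Fin (N+1) → ℤ) :
    splice v q r (Fin.last N) = r (Fin.last N) :=
  if_neg (by have := v.isLt; simp only [Fin.val_last]; omega)

lemma splice_cs (v : Fin N) (q r : Fin (N+1) → ℤ) (u : Fin N) :
    splice v q r u.castSucc = if (u : ℕ) ≤ (v : ℕ) then q u.castSucc else r u.castSucc := by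
  rw [splice]
  simp [Fin.coe_castSucc]

lemma splice_succ (v : Fin N) (q r : Fin (N+1) → ℤ) (u : Fin N) :
    splice v q r u.succ = if (u : ℕ) + 1 ≤ (v : ℕ) then q u.succ else r u.succ := by
  rw [splice]
  simp [Fin.val_succ]

lemma splice_mono (v : Fin N) {q r : Fin (N+1) → ℤ} (hq : Monotone q) (hr : Monotone r)
    (hlink : q v.castSucc ≤ r v.succ) : Monotone (splice v q r) := by
  intro u w huw
  have huw' : (u : ℕ) ≤ (w : ℕ) := Fin.le_def.mp huw
  show (if (u : ℕ) ≤ (v : ℕ) then q u else r u) ≤ (if (w : ℕ) ≤ (v : ℕ) then q w else r w)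
  by_cases hu : (u : ℕ) ≤ (v : ℕ) <;> by_cases hw : (w : ℕ) ≤ (v : ℕ)
  · rw [if_pos hu, if_pos hw]; exact hq huw
  · rw [if_pos hu, if_neg hw]
    calc q u ≤ q v.castSucc := hq (by rw [Fin.le_def]; simpa using hu)
    _ ≤ r v.succ := hlink
    _ ≤ r w := hr (by rw [Fin.le_def]; simp only [Fin.val_succ]; omega)
  · exfalso; omega
  · rw [if_neg hu, if_neg hw]; exact hr huw

lemma sum_pair_rest {β : Type*} [AddCommMonoid β] {i j : Fin n} (hij : i ≠ j)
    (F : Fin n → β) :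
    ∑ k, F k = F i + F j + ∑ k ∈ (Finset.univ.erase i).erase j, F k := by
  have h1 : ∑ k, F k = F i + ∑ k ∈ Finset.univ.erase i, F k :=
    (Finset.add_sum_erase _ F (Finset.mem_univ i)).symm
  have h2 : ∑ k ∈ Finset.univ.erase i, F k
      = F j + ∑ k ∈ (Finset.univ.erase i).erase j, F k :=
    (Finset.add_sum_erase _ F (Finset.mem_erase.mpr ⟨Ne.symm hij, Finset.mem_univ j⟩)).symm
  rw [h1, h2, add_assoc]

lemma prod_pair_rest {β : Type*} [CommMonoid β] {i j : Fin n} (hij : i ≠ j)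
    (F : Fin n → β) :
    ∏ k, F k = F i * F j * ∏ k ∈ (Finset.univ.erase i).erase j, F k := by
  have h1 : ∏ k, F k = F i * ∏ k ∈ Finset.univ.erase i, F k :=
    (Finset.mul_prod_erase _ F (Finset.mem_univ i)).symm
  have h2 : ∏ k ∈ Finset.univ.erase i, F k
      = F j * ∏ k ∈ (Finset.univ.erase i).erase j, F k :=
    (Finset.mul_prod_erase _ F (Finset.mem_erase.mpr ⟨Ne.symm hij, Finset.mem_univ j⟩)).symm
  rw [h1, h2, mul_assoc]

variable (x : Equiv.Perm (Fin n) × (Fin n → Fin (N+1) → ℤ)) (h : (DP x.2).Nonempty)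

lemma flip_q_other {k : Fin n} (hki : k ≠ iOf x h) (hkj : k ≠ jOf x h) :
    (flipAux x h).2 k = x.2 k := by
  rw [flipAux]
  exact (if_neg hki).trans (if_neg hkj)

lemma flip_q_i : (flipAux x h).2 (iOf x h)
    = splice (pOf x h).1 (x.2 (iOf x h)) (x.2 (jOf x h)) := by
  rw [flipAux]
  exact if_pos rfl

lemma flip_q_j : (flipAux x h).2 (jOf x h)
    = splice (pOf x h).1 (x.2 (jOf x h)) (x.2 (iOf x h)) := by
  rw [flipAux]
  exact (if_neg (Ne.symm (iOf_ne_jOf x h))).trans (if_pos rfl)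

lemma val_forward : ∀ k u, ∃ m, (flipAux x h).2 k u = x.2 m u := by
  intro k u
  by_cases hki : k = iOf x h
  · subst hki
    rw [flip_q_i, splice]
    by_cases hu : (u : ℕ) ≤ ((pOf x h).1 : ℕ)
    · exact ⟨iOf x h, by rw [if_pos hu]⟩
    · exact ⟨jOf x h, by rw [if_neg hu]⟩
  by_cases hkj : k = jOf x h
  · subst hkj
    rw [flip_q_j, splice]
    by_cases hu : (u : ℕ) ≤ ((pOf x h).1 : ℕ)
    · exact ⟨jOf x h, by rw [if_pos hu]⟩
    · exact ⟨iOf x h, by rw [if_neg hu]⟩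
  · exact ⟨k, by rw [flip_q_other x h hki hkj]⟩

lemma val_backward : ∀ k u, ∃ m, x.2 k u = (flipAux x h).2 m u := by
  intro k u
  by_cases hki : k = iOf x h
  · subst hki
    by_cases hu : (u : ℕ) ≤ ((pOf x h).1 : ℕ)
    · exact ⟨iOf x h, by rw [flip_q_i, splice, if_pos hu]⟩
    · exact ⟨jOf x h, by rw [flip_q_j, splice, if_neg hu]⟩
  by_cases hkj : k = jOf x h
  · subst hkj
    by_cases hu : (u : ℕ) ≤ ((pOf x h).1 : ℕ)
    · exact ⟨jOf x h, by rw [flip_q_j, splice, if_pos hu]⟩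
    · exact ⟨iOf x h, by rw [flip_q_i, splice, if_neg hu]⟩
  · exact ⟨k, by rw [flip_q_other x h hki hkj]⟩

lemma Bvals_flip : Bvals (flipAux x h).2 = Bvals x.2 := by
  ext y
  simp only [Bvals, Finset.mem_image, Finset.mem_univ, true_and]
  constructor
  · rintro ⟨⟨k, u⟩, rfl⟩
    obtain ⟨m, hm⟩ := val_forward x h k u
    exact ⟨(m, u), hm.symm⟩
  · rintro ⟨⟨k, u⟩, rfl⟩
    obtain ⟨m, hm⟩ := val_backward x h k u
    exact ⟨(m, u), hm.symm⟩

lemma crowd_card_flip (p' : Fin N × ℤ) :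
    (crowd (flipAux x h).2 p').card = (crowd x.2 p').card := by
  classical
  obtain ⟨u, y⟩ := p'
  rw [crowd, crowd, Finset.card_filter, Finset.card_filter]
  rw [sum_pair_rest (iOf_ne_jOf x h), sum_pair_rest (iOf_ne_jOf x h)]
  have Hi := onP_iOf x h
  have Hj := onP_jOf x h
  rw [onP] at Hi Hj
  congr 1
  · rw [flip_q_i, flip_q_j]
    by_cases hm : u = (pOf x h).1
    · subst hm
      unfold onP; simp only [splice_cs, splice_succ]
      split_ifs <;> omega
    · have hm' : (u : ℕ) ≠ ((pOf x h).1 : ℕ) := fun e => hm (Fin.ext e)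
      unfold onP; simp only [splice_cs, splice_succ]
      split_ifs <;> omega
  · apply Finset.sum_congr rfl
    intro k hk
    have hkj : k ≠ jOf x h := Finset.ne_of_mem_erase hk
    have hki : k ≠ iOf x h := Finset.ne_of_mem_erase (Finset.mem_of_mem_erase hk)
    rw [flip_q_other x h hki hkj]

lemma DP_flip : DP (flipAux x h).2 = DP x.2 := by
  ext p'
  rw [DP, DP, Finset.mem_filter, Finset.mem_filter, Finset.mem_product,
    Finset.mem_product, Bvals_flip, crowd_card_flip]

lemma min'_congr {α : Type*} [LinearOrder α] {s t : Finset α} (e : s = t)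
    (hs : s.Nonempty) (ht : t.Nonempty) : s.min' hs = t.min' ht := by subst e; rfl

lemma nonempty_choose_congr {α : Type*} {s t : Finset α} (e : s = t)
    (hs : s.Nonempty) (ht : t.Nonempty) : hs.choose = ht.choose := by subst e; rfl

lemma splice_splice (v : Fin N) (q r : Fin (N+1) → ℤ) :
    splice v (splice v q r) (splice v r q) = q := by
  funext u
  rw [splice, splice, splice]
  by_cases hu : (u : ℕ) ≤ (v : ℕ) <;> simp [hu]

lemma flip_fst : (flipAux x h).1 = x.1 * Equiv.swap (iOf x h) (jOf x h) := rfl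

lemma flip_valid {f g : ℕ → ℕ} (hval : valid f g x) : valid f g (flipAux x h) := by
  have Hi := onP_iOf x h
  have Hj := onP_jOf x h
  rw [onP] at Hi Hj
  intro k
  have hσ : (flipAux x h).1 = x.1 * Equiv.swap (iOf x h) (jOf x h) := rfl
  by_cases hki : k = iOf x h
  · subst hki
    rw [flip_q_i, hσ]
    refine ⟨splice_mono _ (hval _).1 (hval _).1 (le_trans Hi.1 Hj.2), ?_, ?_⟩
    · rw [splice_zero]; exact (hval _).2.1
    · rw [splice_last, Equiv.Perm.mul_apply, Equiv.swap_apply_left]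
      exact (hval _).2.2
  by_cases hkj : k = jOf x h
  · subst hkj
    rw [flip_q_j, hσ]
    refine ⟨splice_mono _ (hval _).1 (hval _).1 (le_trans Hj.1 Hi.2), ?_, ?_⟩
    · rw [splice_zero]; exact (hval _).2.1
    · rw [splice_last, Equiv.Perm.mul_apply, Equiv.swap_apply_right]
      exact (hval _).2.2
  · rw [flip_q_other x h hki hkj, hσ]
    refine ⟨(hval k).1, (hval k).2.1, ?_⟩
    rw [Equiv.Perm.mul_apply, Equiv.swap_apply_of_ne_of_ne hki hkj]
    exact (hval k).2.2

lemma flip_wt : ∏ k, wt ((flipAux x h).2 k) = ∏ k, wt (x.2 k) := by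
  have Hi := onP_iOf x h
  have Hj := onP_jOf x h
  rw [onP] at Hi Hj
  rw [prod_pair_rest (iOf_ne_jOf x h), prod_pair_rest (iOf_ne_jOf x h)]
  congr 1
  · rw [flip_q_i, flip_q_j, wt, wt, wt, wt, ← Finset.prod_mul_distrib,
      ← Finset.prod_mul_distrib]
    apply Finset.prod_congr rfl
    intro u _
    rw [← pow_add, ← pow_add]
    congr 1
    by_cases hm : u = (pOf x h).1
    · rw [hm]
      simp only [splice_cs, splice_succ, if_pos le_rfl,
        if_neg (by omega : ¬(((pOf x h).1:ℕ)+1 ≤ ((pOf x h).1:ℕ)))]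
      omega
    · have hm' : (u : ℕ) ≠ ((pOf x h).1 : ℕ) := fun e => hm (Fin.ext e)
      simp only [splice_cs, splice_succ]
      split_ifs <;> omega
  · apply Finset.prod_congr rfl
    intro k hk
    have hkj : k ≠ jOf x h := Finset.ne_of_mem_erase hk
    have hki : k ≠ iOf x h := Finset.ne_of_mem_erase (Finset.mem_of_mem_erase hk)
    rw [flip_q_other x h hki hkj]

lemma flip_sign : ((Equiv.Perm.sign (flipAux x h).1 : ℤˣ) : ℤ)
    = -((Equiv.Perm.sign x.1 : ℤˣ) : ℤ) := by
  rw [flip_fst, Equiv.Perm.sign_mul, Equiv.Perm.sign_swap (iOf_ne_jOf x h)]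
  simp

lemma flip_ne : flipAux x h ≠ x := by
  intro e
  have h1 : x.1 * Equiv.swap (iOf x h) (jOf x h) = x.1 := congrArg Prod.fst e
  have h2 : Equiv.swap (iOf x h) (jOf x h) = 1 :=
    mul_left_cancel (a := x.1)
      (show x.1 * Equiv.swap (iOf x h) (jOf x h) = x.1 * 1 by rw [mul_one]; exact h1)
  have h3 := Equiv.ext_iff.mp h2 (iOf x h)
  rw [Equiv.swap_apply_left] at h3
  exact iOf_ne_jOf x h (by simpa using h3.symm)

lemma crowd_flip_at_p : crowd (flipAux x h).2 (pOf x h) = crowd x.2 (pOf x h) := by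
  have Hi := onP_iOf x h
  have Hj := onP_jOf x h
  rw [onP] at Hi Hj
  ext k
  rw [crowd, crowd, Finset.mem_filter, Finset.mem_filter]
  by_cases hki : k = iOf x h
  · subst hki
    rw [flip_q_i]
    simp only [Finset.mem_univ, true_and]
    constructor
    · intro _; exact onP_iOf x h
    · intro _
      rw [onP, splice_cs, splice_succ, if_pos le_rfl,
        if_neg (by omega : ¬(((pOf x h).1:ℕ)+1 ≤ ((pOf x h).1:ℕ)))]
      exact ⟨Hi.1, Hj.2⟩
  by_cases hkj : k = jOf x h
  · subst hkj
    rw [flip_q_j]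
    simp only [Finset.mem_univ, true_and]
    constructor
    · intro _; exact onP_jOf x h
    · intro _
      rw [onP, splice_cs, splice_succ, if_pos le_rfl,
        if_neg (by omega : ¬(((pOf x h).1:ℕ)+1 ≤ ((pOf x h).1:ℕ)))]
      exact ⟨Hj.1, Hi.2⟩
  · rw [flip_q_other x h hki hkj]

lemma flip_flip (h2 : (DP (flipAux x h).2).Nonempty) : flipAux (flipAux x h) h2 = x := by
  have eDP : DP (flipAux x h).2 = DP x.2 := DP_flip x h
  have ep : pOf (flipAux x h) h2 = pOf x h := nonempty_choose_congr eDP h2 h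
  have ecrowd : crowd (flipAux x h).2 (pOf (flipAux x h) h2) = crowd x.2 (pOf x h) := by
    rw [ep, crowd_flip_at_p]
  have ei : iOf (flipAux x h) h2 = iOf x h := min'_congr ecrowd _ _
  have ej : jOf (flipAux x h) h2 = jOf x h := by
    rw [jOf, jOf]
    exact min'_congr (by rw [ecrowd, ei]) _ _
  have hq : (flipAux (flipAux x h) h2).2 = x.2 := by
    funext k
    by_cases hki : k = iOf x h
    · subst hki
      have : (flipAux (flipAux x h) h2).2 (iOf x h)
          = splice (pOf x h).1 ((flipAux x h).2 (iOf x h)) ((flipAux x h).2 (jOf x h)) := by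
        conv_lhs => rw [show (iOf x h) = iOf (flipAux x h) h2 from ei.symm]
        rw [flip_q_i, ei, ej, ep]
      rw [this, flip_q_i, flip_q_j, splice_splice]
    by_cases hkj : k = jOf x h
    · subst hkj
      have : (flipAux (flipAux x h) h2).2 (jOf x h)
          = splice (pOf x h).1 ((flipAux x h).2 (jOf x h)) ((flipAux x h).2 (iOf x h)) := by
        conv_lhs => rw [show (jOf x h) = jOf (flipAux x h) h2 from ej.symm]
        rw [flip_q_j, ei, ej, ep]
      rw [this, flip_q_i, flip_q_j, splice_splice]
    · have hki' : k ≠ iOf (flipAux x h) h2 := by rw [ei]; exact hki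
      have hkj' : k ≠ jOf (flipAux x h) h2 := by rw [ej]; exact hkj
      rw [flip_q_other _ h2 hki' hkj', flip_q_other x h hki hkj]
  have hσ : (flipAux (flipAux x h) h2).1 = x.1 := by
    rw [flip_fst, flip_fst, ei, ej, mul_assoc, Equiv.swap_mul_self, mul_one]
  exact Prod.ext hσ hq

lemma crossing_DP_nonempty {f g : ℕ → ℕ} (hval : valid f g x) (hx : Crossing x) :
    (DP x.2).Nonempty := by
  obtain ⟨i, j, v, hij, hm⟩ := hx
  rw [meet] at hm
  set y := max (x.2 i v.castSucc) (x.2 j v.castSucc) with hy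
  have hcs : ∀ k : Fin n, x.2 k v.castSucc ≤ x.2 k v.succ :=
    fun k => (hval k).1 (Fin.castSucc_lt_succ (i := v)).le
  have hOi : onP (x.2 i) (v, y) := by
    rw [onP]
    exact ⟨le_max_left _ _, max_le (hcs i) hm.2⟩
  have hOj : onP (x.2 j) (v, y) := by
    rw [onP]
    exact ⟨le_max_right _ _, max_le hm.1 (hcs j)⟩
  refine ⟨(v, y), ?_⟩
  rw [DP, Finset.mem_filter, Finset.mem_product]
  refine ⟨⟨Finset.mem_univ _, ?_⟩, ?_⟩
  · rw [Bvals, Finset.mem_image]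
    rcases max_choice (x.2 i v.castSucc) (x.2 j v.castSucc) with hc | hc
    · exact ⟨(i, v.castSucc), Finset.mem_univ _, hc.symm⟩
    · exact ⟨(j, v.castSucc), Finset.mem_univ _, hc.symm⟩
  · have : 1 < (crowd x.2 (v, y)).card := by
      apply Finset.one_lt_card.mpr
      refine ⟨i, ?_, j, ?_, hij⟩ <;> rw [crowd, Finset.mem_filter]
      · exact ⟨Finset.mem_univ _, hOi⟩
      · exact ⟨Finset.mem_univ _, hOj⟩
    omega

lemma DP_nonempty_crossing (h : (DP x.2).Nonempty) : Crossing x := by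
  have Hi := onP_iOf x h
  have Hj := onP_jOf x h
  rw [onP] at Hi Hj
  exact ⟨iOf x h, jOf x h, (pOf x h).1, iOf_ne_jOf x h,
    ⟨le_trans Hi.1 Hj.2, le_trans Hj.1 Hi.2⟩⟩

lemma famS_mem_iff (f g : ℕ → ℕ) (hf : Antitone f) (hgf : ∀ i, g i ≤ f i)
    (σ : Equiv.Perm (Fin n)) (q : Fin n → Fin (N+1) → ℤ) :
    (σ, q) ∈ famS n N f g ↔ ∀ i, q i ∈ PathSet N (aF g i) (bF f (σ i)) := by
  rw [famS, Finset.mem_filter, Finset.mem_product]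
  constructor
  · rintro ⟨⟨-, hbox⟩, hval⟩
    have := box_filter_eq (N := N) f g hf hgf σ
    have hmem : q ∈ (Fintype.piFinset fun _ : Fin n => Fintype.piFinset fun _ : Fin (N+1) =>
        Finset.Icc (-(n:ℤ)) ((f 0 : ℤ))).filter fun q => valid f g (σ, q) :=
      Finset.mem_filter.mpr ⟨hbox, hval⟩
    rw [this] at hmem
    exact Fintype.mem_piFinset.mp hmem
  · intro hmem
    have := box_filter_eq (N := N) f g hf hgf σ
    have h2 : q ∈ (Fintype.piFinset fun _ : Fin n => Fintype.piFinset fun _ : Fin (N+1) =>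
        Finset.Icc (-(n:ℤ)) ((f 0 : ℤ))).filter fun q => valid f g (σ, q) := by
      rw [this]
      exact Fintype.mem_piFinset.mpr hmem
    rw [Finset.mem_filter] at h2
    exact ⟨⟨Finset.mem_univ _, h2.1⟩, h2.2⟩

lemma famS_valid {f g : ℕ → ℕ}
    {x : Equiv.Perm (Fin n) × (Fin n → Fin (N+1) → ℤ)} (hx : x ∈ famS n N f g) :
    valid f g x := by
  rw [famS, Finset.mem_filter] at hx
  exact hx.2

lemma flip_mem_famS {f g : ℕ → ℕ} (hx : x ∈ famS n N f g) :
    flipAux x h ∈ famS n N f g := by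
  rw [famS, Finset.mem_filter, Finset.mem_product] at hx ⊢
  obtain ⟨⟨-, hbox⟩, hval⟩ := hx
  refine ⟨⟨Finset.mem_univ _, ?_⟩, flip_valid x h hval⟩
  rw [Fintype.mem_piFinset] at hbox ⊢
  intro k
  rw [Fintype.mem_piFinset]
  intro u
  obtain ⟨m, hm⟩ := val_forward x h k u
  rw [hm]
  exact Fintype.mem_piFinset.mp (hbox m) u

lemma sum_crossing_zero (f g : ℕ → ℕ) :
    ∑ x ∈ (famS n N f g).filter Crossing,
      (((Equiv.Perm.sign x.1 : ℤˣ) : ℤ) • ∏ k, wt (x.2 k)) = 0 := by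
  classical
  apply Finset.sum_involution
    (fun x hx => flipAux x (crossing_DP_nonempty x
      (famS_valid (Finset.mem_filter.mp hx).1) (Finset.mem_filter.mp hx).2))
  · intro x hx
    rw [flip_wt, flip_sign, ← add_smul]
    simp
  · intro x hx _
    exact flip_ne x _
  · intro x hx
    exact flip_flip x _ _
  · intro x hx
    rw [Finset.mem_filter]
    refine ⟨flip_mem_famS _ _ (Finset.mem_filter.mp hx).1,
      DP_nonempty_crossing _ ?_⟩
    rw [DP_flip]
    exact crossing_DP_nonempty x (famS_valid (Finset.mem_filter.mp hx).1)
      (Finset.mem_filter.mp hx).2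

lemma must_meet {q r : Fin (N+1) → ℤ} (hq : Monotone q) (hr : Monotone r)
    (w : Fin (N+1)) (h0 : q 0 ≤ r 0) (hw : r w ≤ q w) (hpos : 0 < (w : ℕ))
    (hno : ∀ v : Fin N, (v : ℕ) < (w : ℕ) → ¬ meet q r v) : False := by
  have key : ∀ m : ℕ, (hm : m ≤ (w : ℕ)) → q ⟨m, by omega⟩ ≤ r ⟨m, by omega⟩
      ∧ (0 < m → q ⟨m, by omega⟩ < r ⟨m, by omega⟩) := by
    intro m
    induction m with
    | zero =>
        intro _
        constructor
        · exact h0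
        · omega
    | succ m ih =>
        intro hm
        have hmw : m ≤ (w : ℕ) := by omega
        have hmN : m < N := by have := w.isLt; omega
        obtain ⟨ihle, -⟩ := ih hmw
        set v : Fin N := ⟨m, hmN⟩ with hv
        have hcs : (v.castSucc : Fin (N+1)) = ⟨m, by omega⟩ := by
          ext; simp [Fin.coe_castSucc, hv]
        have hsc : (v.succ : Fin (N+1)) = ⟨m+1, by omega⟩ := by
          ext; simp [Fin.val_succ, hv]
        have hnm := hno v (by simp only [hv]; omega)
        rw [meet] at hnm
        have hr1 : r (⟨m, by omega⟩ : Fin (N+1)) ≤ r ⟨m+1, by omega⟩ :=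
          hr (by rw [Fin.le_def]; simp)
        have hA : q v.castSucc ≤ r v.succ := by
          rw [hcs, hsc]; exact le_trans ihle hr1
        have hB : ¬ (r v.castSucc ≤ q v.succ) := fun hb => hnm ⟨hA, hb⟩
        rw [hcs, hsc] at hB
        constructor
        · omega
        · omega
  have := (key (w : ℕ) le_rfl).2 hpos
  have hwe : (⟨(w : ℕ), by omega⟩ : Fin (N+1)) = w := by ext; simp
  rw [hwe] at this
  omega

lemma strictMono_perm_eq_one (σ : Equiv.Perm (Fin n)) (hs : StrictMono ⇑σ) : σ = 1 := by
  have hle : ∀ m : ℕ, ∀ τ : Equiv.Perm (Fin n), StrictMono ⇑τ → ∀ i : Fin n,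
      (i : ℕ) = m → m ≤ ((τ i : Fin n) : ℕ) := by
    intro m
    induction m using Nat.strong_induction_on with
    | _ m ih =>
      intro τ hτ i him
      rcases Nat.eq_zero_or_pos m with hm | hm
      · omega
      · have hi' : m - 1 < n := by have := i.isLt; omega
        set i' : Fin n := ⟨m - 1, hi'⟩ with hi'd
        have hlt : i' < i := by rw [Fin.lt_def]; simp [hi'd]; omega
        have h1 := hτ hlt
        have h2 := ih (m-1) (by omega) τ hτ i' (by simp [hi'd])
        rw [Fin.lt_def] at h1
        omega
  have hinv : StrictMono ⇑σ⁻¹ := by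
    intro a b hab
    rcases lt_trichotomy (σ⁻¹ a) (σ⁻¹ b) with hc | hc | hc
    · exact hc
    · exfalso
      have : a = b := by
        have := congrArg σ hc
        simpa using this
      omega
    · exfalso
      have := hs hc
      simp only [Equiv.Perm.inv_def, Equiv.apply_symm_apply] at this
      omega
  apply Equiv.ext
  intro i
  have h1 := hle (i : ℕ) σ hs i rfl
  have h2 := hle ((σ i : Fin n) : ℕ) σ⁻¹ hinv (σ i) rfl
  have h3 : σ⁻¹ (σ i) = i := σ.symm_apply_apply i
  rw [h3] at h2
  have : ((σ i : Fin n) : ℕ) = (i : ℕ) := le_antisymm h2 h1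
  simp [Fin.ext this]

lemma noncross_sigma_one {f g : ℕ → ℕ} (hf : Antitone f) (hg : Antitone g)
    (hval : valid f g x) (hnc : ¬ Crossing x) : x.1 = 1 := by
  apply strictMono_perm_eq_one
  intro i j hij
  by_contra hnb
  have hone : x.1 j < x.1 i := by
    rcases lt_trichotomy (x.1 i) (x.1 j) with hc | hc | hc
    · exact absurd hc hnb
    · exact absurd (x.1.injective hc) (Fin.ne_of_lt hij)
    · exact hc
  have hijN : (i : ℕ) < (j : ℕ) := hij
  have hgm : g (j : ℕ) ≤ g (i : ℕ) := hg (le_of_lt hijN)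
  have haa : aF g j < aF g i := by rw [aF, aF]; omega
  have hσN : ((x.1 j : Fin n) : ℕ) < ((x.1 i : Fin n) : ℕ) := hone
  have hfm : f ((x.1 i : Fin n) : ℕ) ≤ f ((x.1 j : Fin n) : ℕ) := hf (le_of_lt hσN)
  have hbb : bF f (x.1 i) < bF f (x.1 j) := by rw [bF, bF]; omega
  obtain ⟨hmi, h0i, hli⟩ := hval i
  obtain ⟨hmj, h0j, hlj⟩ := hval j
  rcases Nat.eq_zero_or_pos N with hN | hN
  · have hlast : (Fin.last N : Fin (N+1)) = 0 := by ext; simp [hN]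
    rw [hlast] at hli hlj
    omega
  · refine must_meet hmj hmi (Fin.last N) (by omega) (by omega) (by simp [hN]) ?_
    intro v _ hm
    exact hnc ⟨j, i, v, Fin.ne_of_gt hij, hm⟩

end Flip

end Fam

section SSYT

variable {n N : ℕ} (f g : ℕ → ℕ)

lemma mem_box {p : ℕ × ℕ} (hp : p ∈ skewBoxes n f g) :
    p.1 < n ∧ g p.1 ≤ p.2 ∧ p.2 < f p.1 := by
  rw [skewBoxes, Finset.mem_filter, Finset.mem_product, Finset.mem_range,
    Finset.mem_range] at hp
  exact ⟨hp.1.1, hp.2⟩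

lemma box_mem (hf : Antitone f) {i c : ℕ} (hi : i < n) (h1 : g i ≤ c) (h2 : c < f i) :
    (i, c) ∈ skewBoxes n f g := by
  rw [skewBoxes, Finset.mem_filter, Finset.mem_product, Finset.mem_range, Finset.mem_range]
  exact ⟨⟨hi, lt_of_lt_of_le h2 (hf (Nat.zero_le i))⟩, h1, h2⟩

noncomputable def tval (T : skewBoxes n f g → Fin N) (i c : ℕ) : ℕ :=
  if h : (i, c) ∈ skewBoxes n f g then (T ⟨(i,c), h⟩ : ℕ) else 0

lemma tval_eq (T : skewBoxes n f g → Fin N) {i c : ℕ} (h : (i, c) ∈ skewBoxes n f g) :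
    tval f g T i c = (T ⟨(i,c), h⟩ : ℕ) := dif_pos h

lemma tval_lt (T : skewBoxes n f g → Fin N) {i c : ℕ} (h : (i, c) ∈ skewBoxes n f g) :
    tval f g T i c < N := by
  rw [tval_eq f g T h]
  exact (T ⟨(i,c), h⟩).isLt

lemma ssyt_row_le {T : skewBoxes n f g → Fin N} (hT : IsSsyt n f g T) {i c : ℕ}
    (hc : (i, c) ∈ skewBoxes n f g) :
    ∀ c', c ≤ c' → (hc' : (i, c') ∈ skewBoxes n f g) →
      tval f g T i c ≤ tval f g T i c' := by
  intro c'
  induction c' with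
  | zero =>
      intro hle hc'
      have : c = 0 := by omega
      subst this
      rfl
  | succ d ih =>
      intro hle hc'
      rcases Nat.lt_or_ge c (d+1) with hlt | hge
      · have hcd : c ≤ d := by omega
        have hd : (i, d) ∈ skewBoxes n f g := by
          have h1 := mem_box f g hc
          have h2 : (i, d+1) ∈ skewBoxes n f g := hc'
          rw [skewBoxes, Finset.mem_filter, Finset.mem_product, Finset.mem_range,
            Finset.mem_range] at h2
          rw [skewBoxes, Finset.mem_filter, Finset.mem_product, Finset.mem_range,
            Finset.mem_range]
          simp only at h1 h2
          show (i < n ∧ d < f 0) ∧ g i ≤ d ∧ d < f i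
          exact ⟨⟨h2.1.1, by omega⟩, by omega, by omega⟩
        have step := (hT ⟨(i, d), hd⟩ ⟨(i, d+1), hc'⟩).1 (by simp)
        have := ih hcd hd
        rw [tval_eq f g T hd, tval_eq f g T hc'] at *
        have step' : (T ⟨(i, d), hd⟩ : ℕ) ≤ (T ⟨(i, d+1), hc'⟩ : ℕ) := step
        omega
      · have : c = d + 1 := by omega
        subst this
        rfl

lemma dc_card {a b : ℕ} (S : Finset ℕ) (hS : S ⊆ Finset.Ico a b)
    (hdc : ∀ c' c : ℕ, a ≤ c' → c' ≤ c → c ∈ S → c' ∈ S) :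
    ∀ c, a ≤ c → c < b → (c ∈ S ↔ c < a + S.card) := by
  intro c hac hcb
  constructor
  · intro hc
    have hsub : Finset.Icc a c ⊆ S := by
      intro c' hc'
      rw [Finset.mem_Icc] at hc'
      exact hdc c' c hc'.1 hc'.2 hc
    have := Finset.card_le_card hsub
    rw [Nat.card_Icc] at this
    omega
  · intro hlt
    by_contra hc
    have hsub : S ⊆ Finset.Ico a c := by
      intro d hd
      have hd' := hS hd
      rw [Finset.mem_Ico] at hd' ⊢
      refine ⟨hd'.1, ?_⟩
      by_contra hdc2
      exact hc (hdc c d hac (by omega) hd)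
    have := Finset.card_le_card hsub
    rw [Nat.card_Ico] at this
    omega

noncomputable def rowCnt (T : skewBoxes n f g → Fin N) (i : ℕ) (u : ℕ) : ℕ :=
  ((Finset.Ico (g i) (f i)).filter fun c => tval f g T i c < u).card

noncomputable def buildQ (T : skewBoxes n f g → Fin N) : Fin n → Fin (N+1) → ℤ :=
  fun i v => aF g i + (rowCnt f g T (i : ℕ) (v : ℕ) : ℤ)

lemma rowCnt_le (T : skewBoxes n f g → Fin N) (i u : ℕ) :
    rowCnt f g T i u ≤ f i - g i := by
  rw [rowCnt]
  calc ((Finset.Ico (g i) (f i)).filter fun c => tval f g T i c < u).card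
      ≤ (Finset.Ico (g i) (f i)).card := Finset.card_le_card (Finset.filter_subset _ _)
    _ = f i - g i := Nat.card_Ico _ _

lemma rowCnt_mono (T : skewBoxes n f g → Fin N) (i : ℕ) {u u' : ℕ} (h : u ≤ u') :
    rowCnt f g T i u ≤ rowCnt f g T i u' := by
  apply Finset.card_le_card
  intro c hc
  rw [Finset.mem_filter] at hc ⊢
  exact ⟨hc.1, by omega⟩

lemma tval_zero (T : skewBoxes n f g → Fin N) {i : ℕ} (hi : ¬ i < n) (c : ℕ) :
    tval f g T i c = 0 := by
  rw [tval, dif_neg]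
  intro hmem
  exact hi (mem_box f g hmem).1

lemma rowCnt_char (hf : Antitone f) {T : skewBoxes n f g → Fin N} (hT : IsSsyt n f g T)
    {i : ℕ} (u : ℕ) {c : ℕ} (hc1 : g i ≤ c) (hc2 : c < f i) :
    (tval f g T i c < u ↔ c < g i + rowCnt f g T i u) := by
  have := dc_card ((Finset.Ico (g i) (f i)).filter fun c => tval f g T i c < u)
    (Finset.filter_subset _ _) ?_ c hc1 hc2
  · rw [rowCnt, ← this, Finset.mem_filter, Finset.mem_Ico]
    constructor
    · intro h; exact ⟨⟨hc1, hc2⟩, h⟩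
    · intro h; exact h.2
  · intro c' c hac hle hcS
    rw [Finset.mem_filter, Finset.mem_Ico] at hcS ⊢
    obtain ⟨⟨hc1', hc2'⟩, ht⟩ := hcS
    refine ⟨⟨hac, by omega⟩, ?_⟩
    by_cases hi : i < n
    · have hbc' : (i, c') ∈ skewBoxes n f g := box_mem f g hf hi hac (by omega)
      have hbc : (i, c) ∈ skewBoxes n f g := box_mem f g hf hi hc1' hc2'
      have := ssyt_row_le f g hT hbc' c hle hbc
      omega
    · rw [tval_zero f g T hi] at ht ⊢
      exact ht

lemma rowCnt_step (hf : Antitone f) (hg : Antitone g) (hgf : ∀ i, g i ≤ f i)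
    {T : skewBoxes n f g → Fin N} (hT : IsSsyt n f g T) (i : ℕ) (hi1 : i + 1 < n) (u : ℕ) :
    g (i+1) + rowCnt f g T (i+1) (u+1) ≤ g i + rowCnt f g T i u := by
  by_contra hcon
  push_neg at hcon
  set c := g i + rowCnt f g T i u with hc
  have h1 : g (i+1) ≤ c := le_trans (hg (by omega)) (Nat.le_add_right _ _)
  have h2 : c < f (i+1) := by
    have := rowCnt_le f g T (i+1) (u+1)
    have := hgf (i+1)
    omega
  have h3 : tval f g T (i+1) c < u + 1 :=
    (rowCnt_char f g hf hT (u+1) h1 h2).mpr (by omega)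
  have h4 : c < f i := lt_of_lt_of_le h2 (hf (by omega))
  have h5 : ¬ tval f g T i c < u := by
    rw [rowCnt_char f g hf hT u (Nat.le_add_right _ _) h4]
    omega
  have hb1 : (i, c) ∈ skewBoxes n f g := box_mem f g hf (by omega) (Nat.le_add_right _ _) h4
  have hb2 : (i+1, c) ∈ skewBoxes n f g := box_mem f g hf hi1 h1 h2
  have hcol := (hT ⟨(i,c),hb1⟩ ⟨(i+1,c),hb2⟩).2 (by simp)
  have hcol' : (T ⟨(i,c),hb1⟩ : ℕ) < (T ⟨(i+1,c),hb2⟩ : ℕ) := hcol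
  rw [tval_eq f g T hb2] at h3
  rw [tval_eq f g T hb1] at h5
  omega

lemma buildQ_adj (hf : Antitone f) (hg : Antitone g) (hgf : ∀ i, g i ≤ f i)
    {T : skewBoxes n f g → Fin N} (hT : IsSsyt n f g T) (i j : Fin n)
    (hj : (j : ℕ) = (i : ℕ) + 1) (u : Fin N) :
    buildQ f g T j u.succ < buildQ f g T i u.castSucc := by
  have hstep := rowCnt_step f g hf hg hgf hT (i : ℕ) (by rw [← hj]; exact j.isLt) (u : ℕ)
  rw [buildQ, buildQ, aF, aF]
  have e1 : ((u.succ : Fin (N+1)) : ℕ) = (u : ℕ) + 1 := Fin.val_succ u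
  have e2 : ((u.castSucc : Fin (N+1)) : ℕ) = (u : ℕ) := Fin.coe_castSucc u
  rw [e1, e2, hj]
  omega

lemma buildQ_mono {T : skewBoxes n f g → Fin N} (i : Fin n) : Monotone (buildQ f g T i) := by
  intro v w hvw
  rw [buildQ, buildQ]
  have := rowCnt_mono f g T (i : ℕ) (Fin.le_def.mp hvw)
  omega

lemma buildQ_gap (hf : Antitone f) (hg : Antitone g) (hgf : ∀ i, g i ≤ f i)
    {T : skewBoxes n f g → Fin N} (hT : IsSsyt n f g T) :
    ∀ (d : ℕ) (i j : Fin n), (j : ℕ) = (i : ℕ) + 1 + d → ∀ u : Fin N,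
      buildQ f g T j u.succ < buildQ f g T i u.castSucc := by
  intro d
  induction d with
  | zero =>
      intro i j hj u
      exact buildQ_adj f g hf hg hgf hT i j (by omega) u
  | succ d ih =>
      intro i j hj u
      have hmid : ((i : ℕ) + 1 + d) < n := by have := j.isLt; omega
      set m : Fin n := ⟨(i : ℕ) + 1 + d, hmid⟩ with hm
      have h1 := ih i m (by simp [hm]) u
      have h2 := buildQ_adj f g hf hg hgf hT m j (by simp [hm]; omega) u
      have h3 : buildQ f g T m u.castSucc ≤ buildQ f g T m u.succ :=
        buildQ_mono f g m (Fin.castSucc_lt_succ (i := u)).le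
      omega

lemma buildQ_noncross (hf : Antitone f) (hg : Antitone g) (hgf : ∀ i, g i ≤ f i)
    {T : skewBoxes n f g → Fin N} (hT : IsSsyt n f g T) :
    ¬ Crossing ((1 : Equiv.Perm (Fin n)), buildQ f g T) := by
  rintro ⟨i, j, v, hij, hm⟩
  rw [meet] at hm
  simp only at hm
  rcases lt_trichotomy (i : ℕ) (j : ℕ) with hc | hc | hc
  · have := buildQ_gap f g hf hg hgf hT ((j : ℕ) - (i : ℕ) - 1) i j (by omega) v
    omega
  · exact hij (Fin.ext hc)
  · have := buildQ_gap f g hf hg hgf hT ((i : ℕ) - (j : ℕ) - 1) j i (by omega) v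
    omega

lemma rowCnt_zero (T : skewBoxes n f g → Fin N) (i : ℕ) : rowCnt f g T i 0 = 0 := by
  rw [rowCnt]
  rw [Finset.filter_eq_empty_iff.mpr (by intro c _; omega)]
  simp

lemma rowCnt_top (hf : Antitone f) (T : skewBoxes n f g → Fin N) (i : Fin n) :
    rowCnt f g T (i : ℕ) N = f (i : ℕ) - g (i : ℕ) := by
  rw [rowCnt]
  rw [Finset.filter_true_of_mem, Nat.card_Ico]
  intro c hc
  rw [Finset.mem_Ico] at hc
  exact tval_lt f g T (box_mem f g hf i.isLt hc.1 hc.2)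

lemma buildQ_valid (hf : Antitone f) (hgf : ∀ i, g i ≤ f i)
    (T : skewBoxes n f g → Fin N) :
    valid f g ((1 : Equiv.Perm (Fin n)), buildQ f g T) := by
  intro i
  refine ⟨buildQ_mono f g i, ?_, ?_⟩
  · show buildQ f g T i 0 = aF g i
    rw [buildQ]
    have h00 : ((0 : Fin (N+1)) : ℕ) = 0 := rfl
    rw [h00, rowCnt_zero]
    simp
  · show buildQ f g T i (Fin.last N) = bF f ((1 : Equiv.Perm (Fin n)) i)
    rw [buildQ]
    have hNN : ((Fin.last N : Fin (N+1)) : ℕ) = N := rfl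
    rw [hNN, rowCnt_top f g hf T i]
    simp only [Equiv.Perm.one_apply]
    rw [aF, bF]
    have h1 := hgf (i : ℕ)
    have h2 : ((f (i:ℕ) - g (i:ℕ) : ℕ) : ℤ) = (f (i:ℕ) : ℤ) - (g (i:ℕ) : ℤ) := by
      omega
    omega

lemma buildQ_mem_famS (hf : Antitone f) (hgf : ∀ i, g i ≤ f i)
    (T : skewBoxes n f g → Fin N) :
    ((1 : Equiv.Perm (Fin n)), buildQ f g T) ∈ famS n N f g := by
  rw [famS_mem_iff f g hf hgf]
  intro i
  simp only [Equiv.Perm.one_apply]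
  have hval := buildQ_valid f g hf hgf T
  obtain ⟨hmono, h0, hl⟩ := hval i
  have h0' : buildQ f g T i 0 = aF g i := h0
  have hl' : buildQ f g T i (Fin.last N) = bF f i := hl
  rw [PathSet, Finset.mem_filter]
  refine ⟨?_, hmono, h0', ?_⟩
  · rw [Fintype.mem_piFinset]
    intro v
    rw [Finset.mem_Icc]
    have h1 : buildQ f g T i 0 ≤ buildQ f g T i v := hmono (Fin.zero_le v)
    have h2 : buildQ f g T i v ≤ buildQ f g T i (Fin.last N) := hmono (Fin.le_last v)
    omega
  · exact hl'

lemma exists_height {q : Fin (N+1) → ℤ} (hq : Monotone q) {y : ℤ}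
    (h0 : q 0 ≤ y) (hl : y < q (Fin.last N)) :
    ∃ v : Fin N, q v.castSucc ≤ y ∧ y < q v.succ := by
  have hN : 0 < N := by
    by_contra hN
    have : (Fin.last N : Fin (N+1)) = 0 := by ext; simp; omega
    rw [this] at hl
    omega
  set V := Finset.univ.filter (fun v : Fin N => y < q v.succ) with hV
  have hVne : V.Nonempty := by
    refine ⟨⟨N-1, by omega⟩, ?_⟩
    rw [hV, Finset.mem_filter]
    refine ⟨Finset.mem_univ _, ?_⟩
    have : ((⟨N-1, by omega⟩ : Fin N).succ : Fin (N+1)) = Fin.last N := by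
      ext; simp [Fin.val_succ]; omega
    rw [this]
    exact hl
  set v := V.min' hVne with hv
  have hvmem : v ∈ V := Finset.min'_mem _ _
  rw [hV, Finset.mem_filter] at hvmem
  refine ⟨v, ?_, hvmem.2⟩
  rcases Nat.eq_zero_or_pos (v : ℕ) with h0v | h0v
  · have : (v.castSucc : Fin (N+1)) = 0 := by ext; simp [Fin.coe_castSucc]; omega
    rw [this]
    exact h0
  · set w : Fin N := ⟨(v : ℕ) - 1, by have := v.isLt; omega⟩ with hw
    have hwv : w < v := by rw [Fin.lt_def]; simp [hw]; omega
    have hwnot : w ∉ V := by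
      intro hmem
      have := Finset.min'_le V w hmem
      rw [← hv] at this
      exact absurd (lt_of_le_of_lt this hwv) (lt_irrefl _)
    rw [hV, Finset.mem_filter] at hwnot
    push_neg at hwnot
    have hq2 := hwnot (Finset.mem_univ _)
    have : (w.succ : Fin (N+1)) = v.castSucc := by
      ext; simp [Fin.val_succ, Fin.coe_castSucc, hw]; omega
    rw [this] at hq2
    exact hq2

lemma height_unique {q : Fin (N+1) → ℤ} (hq : Monotone q) {y : ℤ} {v w : Fin N}
    (hv : q v.castSucc ≤ y ∧ y < q v.succ) (hw : q w.castSucc ≤ y ∧ y < q w.succ) :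
    v = w := by
  rcases lt_trichotomy (v : ℕ) (w : ℕ) with hc | hc | hc
  · exfalso
    have : q v.succ ≤ q w.castSucc := hq (by rw [Fin.le_def]; simp [Fin.val_succ]; omega)
    omega
  · exact Fin.ext hc
  · exfalso
    have : q w.succ ≤ q v.castSucc := hq (by rw [Fin.le_def]; simp [Fin.val_succ]; omega)
    omega

def rowF (p : skewBoxes n f g) : Fin n := ⟨(p : ℕ × ℕ).1, (mem_box f g p.2).1⟩

def colZ (p : skewBoxes n f g) : ℤ := ((p : ℕ × ℕ).2 : ℤ) - ((p : ℕ × ℕ).1 : ℤ)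

lemma extract_ex {x : Equiv.Perm (Fin n) × (Fin n → Fin (N+1) → ℤ)}
    (hval : valid f g x) (hone : x.1 = 1) (p : skewBoxes n f g) :
    ∃ v : Fin N, x.2 (rowF f g p) v.castSucc ≤ colZ f g p
      ∧ colZ f g p < x.2 (rowF f g p) v.succ := by
  obtain ⟨hmono, h0, hl⟩ := hval (rowF f g p)
  rw [hone] at hl
  simp only [Equiv.Perm.one_apply] at hl
  obtain ⟨hin, hgc, hcf⟩ := mem_box f g p.2
  apply exists_height hmono
  · rw [h0, aF, colZ]
    have : ((rowF f g p : Fin n) : ℕ) = (p : ℕ × ℕ).1 := rfl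
    rw [this]
    omega
  · rw [hl, bF, colZ]
    have : ((rowF f g p : Fin n) : ℕ) = (p : ℕ × ℕ).1 := rfl
    rw [this]
    omega

noncomputable def extractT {x : Equiv.Perm (Fin n) × (Fin n → Fin (N+1) → ℤ)}
    (hval : valid f g x) (hone : x.1 = 1) : skewBoxes n f g → Fin N :=
  fun p => (extract_ex f g hval hone p).choose

lemma extractT_spec {x : Equiv.Perm (Fin n) × (Fin n → Fin (N+1) → ℤ)}
    (hval : valid f g x) (hone : x.1 = 1) (p : skewBoxes n f g) :
    x.2 (rowF f g p) (extractT f g hval hone p).castSucc ≤ colZ f g p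
      ∧ colZ f g p < x.2 (rowF f g p) (extractT f g hval hone p).succ :=
  (extract_ex f g hval hone p).choose_spec

lemma extract_rowCnt (hf : Antitone f) {x : Equiv.Perm (Fin n) × (Fin n → Fin (N+1) → ℤ)}
    (hval : valid f g x) (hone : x.1 = 1) (i : Fin n) (v : Fin (N+1)) :
    (rowCnt f g (extractT f g hval hone) (i : ℕ) (v : ℕ) : ℤ)
      = x.2 i v - aF g i := by
  obtain ⟨hmono, h0, hl⟩ := hval i
  rw [hone] at hl
  simp only [Equiv.Perm.one_apply] at hl
  have hv1 : aF g i ≤ x.2 i v := h0 ▸ hmono (Fin.zero_le v)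
  have hv2 : x.2 i v ≤ bF f i := hl ▸ hmono (Fin.le_last v)
  have hAF : aF g i = (g (i:ℕ) : ℤ) - ((i:ℕ) : ℤ) := rfl
  have hBF : bF f i = (f (i:ℕ) : ℤ) - ((i:ℕ) : ℤ) := rfl
  have hkey : ((Finset.Ico (g (i:ℕ)) (f (i:ℕ))).filter
      (fun c => tval f g (extractT f g hval hone) (i:ℕ) c < (v : ℕ)))
      = Finset.Ico (g (i:ℕ)) ((x.2 i v + (i:ℕ)).toNat) := by
    ext c
    rw [Finset.mem_filter, Finset.mem_Ico, Finset.mem_Ico]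
    constructor
    · rintro ⟨⟨hgc, hcf⟩, ht⟩
      have hb : ((i:ℕ), c) ∈ skewBoxes n f g := box_mem f g hf i.isLt hgc hcf
      rw [tval_eq f g _ hb] at ht
      have hspec := extractT_spec f g hval hone ⟨((i:ℕ), c), hb⟩
      have hrow : rowF f g (⟨((i:ℕ), c), hb⟩ : skewBoxes n f g) = i := Fin.ext rfl
      rw [hrow] at hspec
      have hcol : colZ f g (⟨((i:ℕ), c), hb⟩ : skewBoxes n f g)
          = (c : ℤ) - ((i:ℕ) : ℤ) := rfl
      rw [hcol] at hspec
      have hmle : x.2 i (extractT f g hval hone ⟨((i:ℕ), c), hb⟩).succ ≤ x.2 i v :=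
        hmono (by rw [Fin.le_def]; simp [Fin.val_succ]; omega)
      refine ⟨hgc, ?_⟩
      omega
    · rintro ⟨hgc, hcu⟩
      have hcf : c < f (i:ℕ) := by omega
      have hb : ((i:ℕ), c) ∈ skewBoxes n f g := box_mem f g hf i.isLt hgc hcf
      refine ⟨⟨hgc, hcf⟩, ?_⟩
      rw [tval_eq f g _ hb]
      by_contra hge
      push_neg at hge
      have hspec := extractT_spec f g hval hone ⟨((i:ℕ), c), hb⟩
      have hrow : rowF f g (⟨((i:ℕ), c), hb⟩ : skewBoxes n f g) = i := Fin.ext rfl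
      rw [hrow] at hspec
      have hcol : colZ f g (⟨((i:ℕ), c), hb⟩ : skewBoxes n f g)
          = (c : ℤ) - ((i:ℕ) : ℤ) := rfl
      rw [hcol] at hspec
      have hmle : x.2 i v ≤ x.2 i (extractT f g hval hone ⟨((i:ℕ), c), hb⟩).castSucc :=
        hmono (by rw [Fin.le_def]; simp [Fin.coe_castSucc]; omega)
      omega
  rw [rowCnt, hkey, Nat.card_Ico]
  omega

lemma build_extract (hf : Antitone f) {x : Equiv.Perm (Fin n) × (Fin n → Fin (N+1) → ℤ)}
    (hval : valid f g x) (hone : x.1 = 1) :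
    buildQ f g (extractT f g hval hone) = x.2 := by
  funext i v
  rw [buildQ, extract_rowCnt f g hf hval hone i v]
  ring

lemma extract_build (hf : Antitone f) (hgf : ∀ i, g i ≤ f i)
    {T : skewBoxes n f g → Fin N} (hT : IsSsyt n f g T)
    (hval : valid f g ((1 : Equiv.Perm (Fin n)), buildQ f g T))
    (hone : ((1 : Equiv.Perm (Fin n)), buildQ f g T).1 = 1) :
    extractT f g hval hone = T := by
  funext p
  obtain ⟨hin, hgc, hcf⟩ := mem_box f g p.2
  set i : Fin n := rowF f g p with hi
  set c : ℕ := (p : ℕ × ℕ).2 with hc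
  have hiv : ((i : Fin n) : ℕ) = (p : ℕ × ℕ).1 := rfl
  have hb : (((i:ℕ)), c) ∈ skewBoxes n f g := by
    rw [hiv, hc]
    exact p.2
  have htv : tval f g T (i : ℕ) c = (T p : ℕ) := by
    rw [tval_eq f g T hb]
    congr
  have hchar1 : g (i:ℕ) + rowCnt f g T (i:ℕ) ((T p : ℕ)) ≤ c := by
    by_contra hcon
    push_neg at hcon
    have := (rowCnt_char f g hf hT ((T p : ℕ)) (by rw [hiv]; exact hgc)
      (by rw [hiv]; exact hcf)).mpr hcon
    omega
  have hchar2 : c < g (i:ℕ) + rowCnt f g T (i:ℕ) ((T p : ℕ) + 1) := by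
    apply (rowCnt_char f g hf hT ((T p : ℕ) + 1) (by rw [hiv]; exact hgc)
      (by rw [hiv]; exact hcf)).mp
    omega
  apply height_unique (buildQ_mono f g i) (extractT_spec f g hval hone p)
  constructor
  · show buildQ f g T i (T p).castSucc ≤ colZ f g p
    rw [buildQ, aF, colZ]
    have e1 : (((T p).castSucc : Fin (N+1)) : ℕ) = (T p : ℕ) := Fin.coe_castSucc _
    rw [e1, hiv]
    rw [hiv] at hchar1
    omega
  · show colZ f g p < buildQ f g T i (T p).succ
    rw [buildQ, aF, colZ]
    have e1 : (((T p).succ : Fin (N+1)) : ℕ) = (T p : ℕ) + 1 := Fin.val_succ _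
    rw [e1, hiv]
    rw [hiv] at hchar2
    omega

lemma extract_ssyt (hg : Antitone g) {x : Equiv.Perm (Fin n) × (Fin n → Fin (N+1) → ℤ)}
    (hval : valid f g x) (hone : x.1 = 1) (hnc : ¬ Crossing x) :
    IsSsyt n f g (extractT f g hval hone) := by
  set T := extractT f g hval hone with hT
  intro p p'
  constructor
  · rintro ⟨he1, he2⟩
    by_contra hcon
    push_neg at hcon
    have hlt : (T p' : ℕ) < (T p : ℕ) := hcon
    have hrow : rowF f g p' = rowF f g p := Fin.ext he1.symm
    have hs1 := extractT_spec f g hval hone p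
    have hs2 := extractT_spec f g hval hone p'
    rw [← hT] at hs1 hs2
    rw [hrow] at hs2
    have hcol : colZ f g p' = colZ f g p + 1 := by
      rw [colZ, colZ, he1, he2]
      push_cast
      ring
    have hmono := (hval (rowF f g p)).1
    have hle : x.2 (rowF f g p) (T p').succ ≤ x.2 (rowF f g p) (T p).castSucc :=
      hmono (by rw [Fin.le_def]; simp [Fin.val_succ, Fin.coe_castSucc]; omega)
    omega
  · rintro ⟨he1, he2⟩
    by_contra hcon
    push_neg at hcon
    have hle : (T p' : ℕ) ≤ (T p : ℕ) := hcon
    set i : Fin n := rowF f g p with hi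
    set i' : Fin n := rowF f g p' with hi'
    have hii' : (i' : ℕ) = (i : ℕ) + 1 := he1
    have hne : i ≠ i' := by
      intro e
      rw [e] at hii'
      omega
    have hs1 := extractT_spec f g hval hone p
    have hs2 := extractT_spec f g hval hone p'
    rw [← hT] at hs1 hs2
    rw [← hi] at hs1
    rw [← hi'] at hs2
    have hcol : colZ f g p' = colZ f g p - 1 := by
      rw [colZ, colZ, he1, he2]
      push_cast
      ring
    have hmi := (hval i).1
    have hmi' := (hval i').1
    rcases Nat.lt_or_ge (T p' : ℕ) (T p : ℕ) with hlt | hge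
    · -- strictly smaller : use must_meet below height (T p').succ
      have h0i : x.2 i 0 = aF g i := (hval i).2.1
      have h0i' : x.2 i' 0 = aF g i' := (hval i').2.1
      have haa : aF g i' < aF g i := by
        rw [aF, aF]
        have : g (i' : ℕ) ≤ g (i : ℕ) := hg (by omega)
        omega
      refine must_meet hmi' hmi ((T p').succ : Fin (N+1)) (by omega) ?_ ?_ ?_
      · -- x.2 i (T p').succ ≤ x.2 i' (T p').succ
        have hstep : x.2 i (T p').succ ≤ x.2 i (T p).castSucc :=
          hmi (by rw [Fin.le_def]; simp [Fin.val_succ, Fin.coe_castSucc]; omega)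
        omega
      · simp [Fin.val_succ]
      · intro v _ hm
        exact hnc ⟨i', i, v, Ne.symm hne, hm⟩
    · -- equal heights : direct common point
      have heq : (T p' : ℕ) = (T p : ℕ) := by omega
      have hTeq : T p' = T p := Fin.ext heq
      rw [hTeq] at hs2
      apply hnc
      refine ⟨i, i', T p, hne, ?_, ?_⟩
      · omega
      · omega

lemma rowCnt_succ (T : skewBoxes n f g → Fin N) (i u : ℕ) :
    rowCnt f g T i (u+1) = rowCnt f g T i u
      + ((Finset.Ico (g i) (f i)).filter fun c => tval f g T i c = u).card := by
  rw [rowCnt, rowCnt, Finset.card_filter, Finset.card_filter, Finset.card_filter,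
    ← Finset.sum_add_distrib]
  apply Finset.sum_congr rfl
  intro c _
  split_ifs <;> omega

lemma wt_buildQ (hf : Antitone f) (T : skewBoxes n f g → Fin N) :
    ∏ k : Fin n, wt (buildQ f g T k) = ∏ p : skewBoxes n f g, X (T p) := by
  classical
  set FinVal : ℕ → MvPolynomial (Fin N) ℚ :=
    fun u => if hu : u < N then X (⟨u, hu⟩ : Fin N) else 1 with hFinVal
  set fibcard : ℕ → ℕ → ℕ :=
    fun i u => ((Finset.Ico (g i) (f i)).filter fun c => tval f g T i c = u).card
      with hfib
  set G : ℕ → MvPolynomial (Fin N) ℚ :=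
    fun i => ∏ u ∈ Finset.range N, (FinVal u) ^ (fibcard i u) with hG
  set ψ : ℕ × ℕ → MvPolynomial (Fin N) ℚ :=
    fun pr => if h : pr ∈ skewBoxes n f g then X (T ⟨pr, h⟩) else 1 with hψ
  have hL : ∀ k : Fin n, wt (buildQ f g T k) = G ((k : ℕ)) := by
    intro k
    rw [wt, hG]
    have : ∀ u : Fin N, (X u : MvPolynomial (Fin N) ℚ)
          ^ (buildQ f g T k u.succ - buildQ f g T k u.castSucc).toNat
        = (fun u' : ℕ => (FinVal u') ^ (fibcard (k : ℕ) u')) (u : ℕ) := by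
      intro u
      simp only []
      have hx : FinVal ((u : ℕ)) = X u := by
        rw [hFinVal]
        simp only [u.isLt, dif_pos]
      rw [hx]
      congr 1
      rw [buildQ, buildQ]
      have e1 : ((u.succ : Fin (N+1)) : ℕ) = (u : ℕ) + 1 := Fin.val_succ u
      have e2 : ((u.castSucc : Fin (N+1)) : ℕ) = (u : ℕ) := Fin.coe_castSucc u
      rw [e1, e2]
      have := rowCnt_succ f g T (k : ℕ) (u : ℕ)
      rw [hfib]
      simp only []
      omega
    rw [Finset.prod_congr rfl (fun u _ => this u)]
    exact Fin.prod_univ_eq_prod_range (fun u' => (FinVal u') ^ (fibcard (k : ℕ) u')) N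
  have hR : ∏ p : skewBoxes n f g, (X (T p) : MvPolynomial (Fin N) ℚ)
      = ∏ i ∈ Finset.range n, G i := by
    have h1 : ∏ p : skewBoxes n f g, (X (T p) : MvPolynomial (Fin N) ℚ)
        = ∏ pr ∈ skewBoxes n f g, ψ pr := by
      rw [Finset.univ_eq_attach, ← Finset.prod_attach (skewBoxes n f g) ψ]
      apply Finset.prod_congr rfl
      intro p _
      rw [hψ]
      simp only []
      rw [dif_pos p.2]
    have h2 : ∏ pr ∈ skewBoxes n f g, ψ pr
        = ∏ i ∈ Finset.range n, ∏ c ∈ Finset.Ico (g i) (f i), ψ (i, c) := by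
      rw [skewBoxes, Finset.prod_filter, Finset.prod_product]
      apply Finset.prod_congr rfl
      intro i hi
      rw [← Finset.prod_filter]
      apply Finset.prod_congr ?_ (fun _ _ => rfl)
      ext c
      rw [Finset.mem_filter, Finset.mem_range, Finset.mem_Ico]
      constructor
      · rintro ⟨-, h⟩; exact h
      · intro h
        exact ⟨lt_of_lt_of_le h.2 (hf (Nat.zero_le i)), h⟩
    have h3 : ∀ i ∈ Finset.range n, ∏ c ∈ Finset.Ico (g i) (f i), ψ (i, c) = G i := by
      intro i hi
      rw [Finset.mem_range] at hi
      have hmaps : ∀ c ∈ Finset.Ico (g i) (f i), tval f g T i c ∈ Finset.range N := by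
        intro c hc
        rw [Finset.mem_Ico] at hc
        rw [Finset.mem_range]
        exact tval_lt f g T (box_mem f g hf hi hc.1 hc.2)
      rw [← Finset.prod_fiberwise_of_maps_to hmaps (fun c => ψ (i, c)), hG]
      simp only []
      apply Finset.prod_congr rfl
      intro u hu
      rw [Finset.mem_range] at hu
      have hconst : ∀ c ∈ (Finset.Ico (g i) (f i)).filter
          (fun c => tval f g T i c = u), ψ (i, c) = FinVal u := by
        intro c hc
        rw [Finset.mem_filter, Finset.mem_Ico] at hc
        obtain ⟨⟨hgc, hcf⟩, htv⟩ := hc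
        have hb : (i, c) ∈ skewBoxes n f g := box_mem f g hf hi hgc hcf
        rw [hψ]
        simp only []
        rw [dif_pos hb, hFinVal]
        simp only [hu, dif_pos]
        congr 1
        apply Fin.ext
        show (T ⟨(i, c), hb⟩ : ℕ) = u
        exact (tval_eq f g T hb).symm.trans htv
      rw [Finset.prod_congr rfl hconst, Finset.prod_const, hfib]
    rw [h1, h2]
    exact Finset.prod_congr rfl h3
  rw [Finset.prod_congr rfl (fun k _ => hL k),
    Fin.prod_univ_eq_prod_range (fun i => G i) n, hR]

end SSYT

end JTaux


/-- Jacobi–Trudi identity for skew Schur functions: for partitions `μ ⊆ λ` with at most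
`n` parts, `det(h_{λ_i − μ_j + j − i})_{1≤i,j≤n} = s_{λ/μ}`. -/
theorem jacobi_trudi_skew (n N : ℕ) (f g : ℕ → ℕ)
    (hf : Antitone f) (hg : Antitone g) (hfn : ∀ i ≥ n, f i = 0)
    (hgf : ∀ i, g i ≤ f i) :
    Matrix.det (Matrix.of fun i j : Fin n =>
        hInt N ((f i : ℤ) - (g j : ℤ) + (j : ℤ) - (i : ℤ))) =
      skewSchur n N f g := by
  classical
  rw [JTaux.det_eq_sum_fam f g hf hgf]
  rw [← Finset.sum_filter_add_sum_filter_not (JTaux.famS n N f g) JTaux.Crossing]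
  rw [JTaux.sum_crossing_zero f g, zero_add, skewSchur]
  refine Finset.sum_bij'
    (fun x hx => JTaux.extractT f g
      (JTaux.famS_valid (Finset.mem_filter.mp hx).1)
      (JTaux.noncross_sigma_one x hf hg
        (JTaux.famS_valid (Finset.mem_filter.mp hx).1) (Finset.mem_filter.mp hx).2))
    (fun T hT => ((1 : Equiv.Perm (Fin n)), JTaux.buildQ f g T))
    ?_ ?_ ?_ ?_ ?_
  · -- hi : maps into SSYT filter
    intro x hx
    rw [Finset.mem_filter]
    exact ⟨Finset.mem_univ _, JTaux.extract_ssyt f g hg _ _ (Finset.mem_filter.mp hx).2⟩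
  · -- hj : maps into noncrossing famS
    intro T hT
    rw [Finset.mem_filter]
    refine ⟨JTaux.buildQ_mem_famS f g hf hgf T, ?_⟩
    exact JTaux.buildQ_noncross f g hf hg hgf (Finset.mem_filter.mp hT).2
  · -- left inverse : j (i x) = x
    intro x hx
    have hone := JTaux.noncross_sigma_one x hf hg
      (JTaux.famS_valid (Finset.mem_filter.mp hx).1) (Finset.mem_filter.mp hx).2
    exact Prod.ext hone.symm (JTaux.build_extract f g hf _ _)
  · -- right inverse : i (j T) = T
    intro T hT
    exact JTaux.extract_build f g hf hgf (Finset.mem_filter.mp hT).2 _ rfl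
  · -- values
    intro x hx
    have hone := JTaux.noncross_sigma_one x hf hg
      (JTaux.famS_valid (Finset.mem_filter.mp hx).1) (Finset.mem_filter.mp hx).2
    have hb := JTaux.build_extract f g hf
      (JTaux.famS_valid (Finset.mem_filter.mp hx).1) hone
    have hsgn : ((Equiv.Perm.sign x.1 : ℤˣ) : ℤ) = 1 := by rw [hone]; simp
    rw [hsgn, one_smul, ← hb]
    exact JTaux.wt_buildQ f g hf _
end
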